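/- arXiv:1105.2927 — 5 statements merged into one kernel-verified Lean document; each statement's English description precedes it below -/
import Mathlib

section
/- Fix k ≥ 1 and a nonincreasing sequence of integers N_1 ≥ N_2 ≥ ... ≥ N_k ≥ 0, with the convention N_{k+1} = 0. For p ∈ {0,1}^k define l_p(q) = q^{∑_{i=1}^k p_i N_i} and δ_p(q) = ∏_{i=1}^k (1 - [p_i = 0 and p_{i+1} = 1] · q^{N_i - N_{i+1}}) (with p_{k+1} := 0). Define the partial order p' ≤ p on binary k-tuples with equal number of ones by: ∑_{i=1}^j p'_i ≥ ∑_{i=1}^j p_i for all j. Then for every p ∈ {0,1}^k, as polynomials in q: l_p(q) = ∑_{p' ≤ p, p' ∈ {0,1}^k with the same number of ones as p} l_{p'}(q) · δ_{p'}(q). -/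
open Finset Polynomial

/-- Value of a binary `k`-tuple at 1-based position `i`, with value `0` outside `1..k`
(encoding the conventions `p₀ = 0` and `p_{k+1} = 0`). -/
def ext' (k : ℕ) (p : Fin k → Fin 2) (i : ℕ) : ℕ :=
  if h : 1 ≤ i ∧ i ≤ k then (p ⟨i - 1, by omega⟩ : ℕ) else 0

/-- Number of ones of a binary tuple. -/
def onesCount (k : ℕ) (p : Fin k → Fin 2) : ℕ := ∑ i : Fin k, (p i : ℕ)

/-- The partial order: `p1 ≤ p2` iff every initial partial sum of `p1` is ≥ that of `p2`. -/
def tle (k : ℕ) (p1 p2 : Fin k → Fin 2) : Prop :=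
  ∀ j ∈ Finset.Icc 1 k,
    ∑ i ∈ Finset.Icc 1 j, ext' k p2 i ≤ ∑ i ∈ Finset.Icc 1 j, ext' k p1 i

instance (k : ℕ) (p1 p2 : Fin k → Fin 2) : Decidable (tle k p1 p2) := by
  unfold tle; infer_instance

/-- `l_p(q) = q^{∑ p_i N_i}` as a polynomial in `q = X` over `ℤ`. -/
noncomputable def lTerm (k : ℕ) (N : ℕ → ℕ) (p : Fin k → Fin 2) : Polynomial ℤ :=
  Polynomial.X ^ (∑ i ∈ Finset.Icc 1 k, ext' k p i * N i)

/-- `δ¹_p(q)`: factors read from the right neighbour, convention `p_{k+1} = 0`. -/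
noncomputable def deltaR (k : ℕ) (N : ℕ → ℕ) (p : Fin k → Fin 2) : Polynomial ℤ :=
  ∏ i ∈ Finset.Icc 1 k,
    (1 - if ext' k p i = 0 ∧ ext' k p (i + 1) = 1
         then Polynomial.X ^ (N i - N (i + 1)) else 0)

/-- `δ²_p(q)`: factors read from the left neighbour, conventions `p₀ = 0`, `N₀ = 0`. -/
noncomputable def deltaL (k : ℕ) (N : ℕ → ℕ) (p : Fin k → Fin 2) : Polynomial ℤ :=
  ∏ i ∈ Finset.Icc 1 k,
    (1 - if ext' k p i = 0 ∧ ext' k p (i - 1) = 1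
         then Polynomial.X ^ (N i - N (i - 1)) else 0)

/-- `g_i^1(p)`: change the last `i` ones of `p` (largest positions) into zeros. -/
def g1 (k i : ℕ) (p : Fin k → Fin 2) : Fin k → Fin 2 := fun m =>
  if p m = 1 ∧ (Finset.univ.filter (fun n => m ≤ n ∧ p n = 1)).card ≤ i then 0 else p m

/-- `g_i^0(p)`: change the last `i` zeros of `p` (largest positions) into ones. -/
def g0 (k i : ℕ) (p : Fin k → Fin 2) : Fin k → Fin 2 := fun m =>
  if p m = 0 ∧ (Finset.univ.filter (fun n => m ≤ n ∧ p n = 0)).card ≤ i then 1 else p m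

/-- `f_i^1(p)`: change the first `i` ones of `p` (smallest positions) into zeros. -/
def f1 (k i : ℕ) (p : Fin k → Fin 2) : Fin k → Fin 2 := fun m =>
  if p m = 1 ∧ (Finset.univ.filter (fun n => n ≤ m ∧ p n = 1)).card ≤ i then 0 else p m

/-- `f_i^0(p)`: change the first `i` zeros of `p` (smallest positions) into ones. -/
def f0 (k i : ℕ) (p : Fin k → Fin 2) : Fin k → Fin 2 := fun m =>
  if p m = 0 ∧ (Finset.univ.filter (fun n => n ≤ m ∧ p n = 0)).card ≤ i then 1 else p m

/-- Coordinatewise complement of a binary tuple. -/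
def compl' (k : ℕ) (p : Fin k → Fin 2) : Fin k → Fin 2 := fun m => 1 - p m

/-- 1-based position of the `j`-th one of `p`. -/
noncomputable def pos1 (k j : ℕ) (p : Fin k → Fin 2) : ℕ :=
  sInf {m | ext' k p m = 1 ∧ ∑ i ∈ Finset.Icc 1 m, ext' k p i = j}

/-- 1-based position of the `j`-th zero of `p`. -/
noncomputable def pos0 (k j : ℕ) (p : Fin k → Fin 2) : ℕ :=
  sInf {m | 1 ≤ m ∧ m ≤ k ∧ ext' k p m = 0 ∧
    ∑ i ∈ Finset.Icc 1 m, (1 - ext' k p i) = j}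

open Matrix


namespace StmtAux

open Finset Polynomial

variable {k : ℕ}

/-- Partial sums of `ext'`. -/
def psum (k : ℕ) (p : Fin k → Fin 2) (j : ℕ) : ℕ := ∑ i ∈ Finset.Icc 1 j, ext' k p i

lemma ext'_le_one (p : Fin k → Fin 2) (i : ℕ) : ext' k p i ≤ 1 := by
  unfold ext'
  split
  · exact Nat.lt_succ_iff.mp (Fin.is_lt _)
  · exact Nat.zero_le 1

lemma ext'_out (p : Fin k → Fin 2) {i : ℕ} (h : k < i ∨ i = 0) : ext' k p i = 0 := by
  unfold ext'
  rw [dif_neg (by omega)]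

lemma ext'_val (p : Fin k → Fin 2) (m : Fin k) : ext' k p ((m : ℕ) + 1) = (p m : ℕ) := by
  unfold ext'
  rw [dif_pos ⟨by omega, by omega⟩]
  congr 1

lemma psum_zero (p : Fin k → Fin 2) : psum k p 0 = 0 := by
  unfold psum
  rw [show Finset.Icc 1 0 = (∅ : Finset ℕ) from Finset.Icc_eq_empty (by omega), Finset.sum_empty]

lemma psum_succ (p : Fin k → Fin 2) (j : ℕ) :
    psum k p (j + 1) = psum k p j + ext' k p (j + 1) :=
  Finset.sum_Icc_succ_top (by omega) _

lemma psum_stab (p : Fin k → Fin 2) {j : ℕ} (h : k ≤ j) : psum k p j = psum k p k := by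
  unfold psum
  refine (Finset.sum_subset (Finset.Icc_subset_Icc_right h) fun x hx hnx => ?_).symm
  simp only [Finset.mem_Icc] at hx hnx
  exact ext'_out p (by omega)

lemma onesCount_eq (p : Fin k → Fin 2) : onesCount k p = psum k p k := by
  unfold onesCount psum
  refine Finset.sum_bij' (fun (m : Fin k) _ => (m : ℕ) + 1)
    (fun i hi => (⟨i - 1, by simp only [Finset.mem_Icc] at hi; omega⟩ : Fin k)) ?_ ?_ ?_ ?_ ?_
  · intro m _; simp only [Finset.mem_Icc]; omega
  · intro i hi; exact Finset.mem_univ _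
  · intro m _; apply Fin.ext; simp
  · intro i hi; simp only [Finset.mem_Icc] at hi; simp; omega
  · intro m _; exact (ext'_val p m).symm


/-- Swap a `01` pattern at positions `i, i+1` (for each `i ∈ T`) into `10`. -/
def swapF (k : ℕ) (T : Finset ℕ) (p : Fin k → Fin 2) : Fin k → Fin 2 := fun m =>
  if ((m : ℕ) + 1) ∈ T then 1 else if (m : ℕ) ∈ T then 0 else p m

/-- Swap a `10` pattern at positions `i, i+1` (for each `i ∈ T`) into `01`. -/
def unswapF (k : ℕ) (T : Finset ℕ) (p : Fin k → Fin 2) : Fin k → Fin 2 := fun m =>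
  if ((m : ℕ) + 1) ∈ T then 0 else if (m : ℕ) ∈ T then 1 else p m

/-- Descent positions: `p_i = 0`, `p_{i+1} = 1`. -/
def Dset (k : ℕ) (p : Fin k → Fin 2) : Finset ℕ :=
  (Finset.Icc 1 k).filter fun i => ext' k p i = 0 ∧ ext' k p (i + 1) = 1

/-- Ascent positions with strictly larger partial sum than the reference `p`. -/
def Bset (k : ℕ) (q p : Fin k → Fin 2) : Finset ℕ :=
  (Finset.Icc 1 k).filter fun i =>
    ext' k q i = 1 ∧ ext' k q (i + 1) = 0 ∧ psum k p i < psum k q i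

lemma mem_Dset {p : Fin k → Fin 2} {i : ℕ} (h : i ∈ Dset k p) :
    1 ≤ i ∧ i + 1 ≤ k ∧ ext' k p i = 0 ∧ ext' k p (i + 1) = 1 := by
  simp only [Dset, Finset.mem_filter, Finset.mem_Icc] at h
  refine ⟨h.1.1, ?_, h.2.1, h.2.2⟩
  by_contra hc
  have := ext'_out p (i := i + 1) (by omega)
  omega

lemma mem_Bset {q p : Fin k → Fin 2} {i : ℕ} (h : i ∈ Bset k q p) :
    1 ≤ i ∧ i ≤ k ∧ ext' k q i = 1 ∧ ext' k q (i + 1) = 0 ∧ psum k p i < psum k q i := by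
  simp only [Bset, Finset.mem_filter, Finset.mem_Icc] at h
  exact ⟨h.1.1, h.1.2, h.2.1, h.2.2.1, h.2.2.2⟩

lemma ext'_swapF {T : Finset ℕ} {p : Fin k → Fin 2} {i : ℕ} (h1 : 1 ≤ i) (h2 : i ≤ k) :
    ext' k (swapF k T p) i = if i ∈ T then 1 else if i - 1 ∈ T then 0 else ext' k p i := by
  conv_lhs => unfold ext' swapF
  rw [dif_pos ⟨h1, h2⟩]
  have hi : i - 1 + 1 = i := by omega
  simp only [hi]
  split_ifs with ha hb
  · simp
  · simp
  · unfold ext'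
    rw [dif_pos ⟨h1, h2⟩]

lemma ext'_unswapF {T : Finset ℕ} {p : Fin k → Fin 2} {i : ℕ} (h1 : 1 ≤ i) (h2 : i ≤ k) :
    ext' k (unswapF k T p) i = if i ∈ T then 0 else if i - 1 ∈ T then 1 else ext' k p i := by
  conv_lhs => unfold ext' unswapF
  rw [dif_pos ⟨h1, h2⟩]
  have hi : i - 1 + 1 = i := by omega
  simp only [hi]
  split_ifs with ha hb
  · simp
  · simp
  · unfold ext'
    rw [dif_pos ⟨h1, h2⟩]

lemma Dset_not_adj {T : Finset ℕ} {p : Fin k → Fin 2} (hT : T ⊆ Dset k p) {i : ℕ}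
    (hi : i ∈ T) : i + 1 ∉ T := fun h => by
  have a := mem_Dset (hT hi)
  have b := mem_Dset (hT h)
  omega

lemma psum_swapF {T : Finset ℕ} {p : Fin k → Fin 2} (hT : T ⊆ Dset k p) :
    ∀ j, j ≤ k → psum k (swapF k T p) j = psum k p j + (if j ∈ T then 1 else 0) := by
  intro j
  induction j with
  | zero =>
    intro _
    have h0 : (0 : ℕ) ∉ T := fun h => by have := (mem_Dset (hT h)).1; omega
    simp [psum_zero, h0]
  | succ j ih =>
    intro hjk
    rw [psum_succ, psum_succ, ih (by omega), ext'_swapF (by omega) hjk]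
    simp only [Nat.add_sub_cancel]
    by_cases h1 : j + 1 ∈ T
    · have hj : j ∉ T := fun hj => Dset_not_adj hT hj h1
      have he := (mem_Dset (hT h1)).2.2.1
      simp only [h1, if_true, hj, if_neg hj, if_false]
      omega
    · by_cases h2 : j ∈ T
      · have he := (mem_Dset (hT h2)).2.2.2
        simp only [h1, if_false, h2, if_true]
        omega
      · simp only [h1, if_false, h2]
        omega

lemma fin2_eq_of_val {a b : Fin 2} (h : (a : ℕ) = (b : ℕ)) : a = b := Fin.ext h

lemma unswap_swap {T : Finset ℕ} {p : Fin k → Fin 2} (hT : T ⊆ Dset k p) :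
    unswapF k T (swapF k T p) = p := by
  funext m
  unfold unswapF swapF
  by_cases h1 : ((m : ℕ) + 1) ∈ T
  · have he := (mem_Dset (hT h1)).2.2.1
    have hv : (p m : ℕ) = 0 := by rw [← ext'_val p m]; exact he
    simp only [h1, if_true]
    exact fin2_eq_of_val (by simp [hv])
  · by_cases h2 : (m : ℕ) ∈ T
    · have hd := mem_Dset (hT h2)
      have hv : (p m : ℕ) = 1 := by rw [← ext'_val p m]; exact hd.2.2.2
      simp only [h1, if_false, h2, if_true]
      exact fin2_eq_of_val (by simp [hv])
    · simp only [h1, if_false, h2]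

lemma swap_unswap {T : Finset ℕ} {p : Fin k → Fin 2}
    (hA : ∀ i ∈ T, 1 ≤ i ∧ i + 1 ≤ k ∧ ext' k p i = 1 ∧ ext' k p (i + 1) = 0) :
    swapF k T (unswapF k T p) = p := by
  funext m
  unfold swapF unswapF
  by_cases h1 : ((m : ℕ) + 1) ∈ T
  · have hv : (p m : ℕ) = 1 := by rw [← ext'_val p m]; exact (hA _ h1).2.2.1
    simp only [h1, if_true]
    exact fin2_eq_of_val (by simpa using hv.symm)
  · by_cases h2 : (m : ℕ) ∈ T
    · have hd := hA _ h2
      have hv : (p m : ℕ) = 0 := by rw [← ext'_val p m]; exact hd.2.2.2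
      simp only [h1, if_false, h2, if_true]
      exact fin2_eq_of_val (by simpa using hv.symm)
    · simp only [h1, if_false, h2]

lemma eq_of_ext' {p1 p2 : Fin k → Fin 2}
    (h : ∀ i, 1 ≤ i → i ≤ k → ext' k p1 i = ext' k p2 i) : p1 = p2 := by
  funext m
  have := h ((m : ℕ) + 1) (by omega) (by omega)
  rw [ext'_val, ext'_val] at this
  exact fin2_eq_of_val this

/-- swapping at descents produces ascents. -/
lemma swap_asc {T : Finset ℕ} {p : Fin k → Fin 2} (hT : T ⊆ Dset k p) {i : ℕ} (hi : i ∈ T) :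
    ext' k (swapF k T p) i = 1 ∧ ext' k (swapF k T p) (i + 1) = 0 := by
  have hd := mem_Dset (hT hi)
  constructor
  · rw [ext'_swapF hd.1 (by omega), if_pos hi]
  · have hnadj := Dset_not_adj hT hi
    rw [ext'_swapF (by omega) hd.2.1, if_neg hnadj, Nat.add_sub_cancel, if_pos hi]

/-- unswapping at (bounded) ascents produces descents. -/
lemma unswap_desc {T : Finset ℕ} {p : Fin k → Fin 2}
    (hA : ∀ i ∈ T, 1 ≤ i ∧ i + 1 ≤ k ∧ ext' k p i = 1 ∧ ext' k p (i + 1) = 0) :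
    T ⊆ Dset k (unswapF k T p) := by
  intro i hi
  have hd := hA _ hi
  have hnadj : i + 1 ∉ T := fun h => by have := hA _ h; omega
  simp only [Dset, Finset.mem_filter, Finset.mem_Icc]
  refine ⟨⟨hd.1, by omega⟩, ?_, ?_⟩
  · rw [ext'_unswapF hd.1 (by omega), if_pos hi]
  · rw [ext'_unswapF (by omega) hd.2.1, if_neg hnadj, Nat.add_sub_cancel, if_pos hi]

lemma exp_swap {N : ℕ → ℕ} (hmono : ∀ i, 1 ≤ i → i ≤ k → N (i + 1) ≤ N i)
    {T : Finset ℕ} {p : Fin k → Fin 2} (hT : T ⊆ Dset k p) :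
    ∑ i ∈ Finset.Icc 1 k, ext' k (swapF k T p) i * N i =
      (∑ i ∈ Finset.Icc 1 k, ext' k p i * N i) + ∑ i ∈ T, (N i - N (i + 1)) := by
  have hTIcc : T ⊆ Finset.Icc 1 k := fun i hi => by
    have := mem_Dset (hT hi); simp only [Finset.mem_Icc]; omega
  have key : ∀ i ∈ Finset.Icc 1 k,
      ext' k (swapF k T p) i * N i + (if i - 1 ∈ T then N i else 0) =
      ext' k p i * N i + (if i ∈ T then N i else 0) := by
    intro i hi
    simp only [Finset.mem_Icc] at hi
    rw [ext'_swapF hi.1 hi.2]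
    by_cases h1 : i ∈ T
    · have hd := mem_Dset (hT h1)
      have h2 : i - 1 ∉ T := fun h => by
        have := Dset_not_adj hT h
        have h1' := (mem_Dset (hT h)).1
        rw [show i - 1 + 1 = i from by omega] at this
        exact this h1
      simp only [h1, if_true, h2, if_false, hd.2.2.1]
      omega
    · by_cases h2 : i - 1 ∈ T
      · have hd := mem_Dset (hT h2)
        have he : ext' k p i = 1 := by
          have := hd.2.2.2; rwa [show i - 1 + 1 = i from by omega] at this
        simp only [h1, if_false, h2, if_true, he]
        omega
      · simp only [h1, if_false, h2]
  have hsum := Finset.sum_congr rfl key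
  rw [Finset.sum_add_distrib, Finset.sum_add_distrib] at hsum
  have e1 : ∑ i ∈ Finset.Icc 1 k, (if i ∈ T then N i else 0) = ∑ i ∈ T, N i := by
    rw [Finset.sum_ite_mem, Finset.inter_eq_right.mpr hTIcc]
  have e2 : ∑ i ∈ Finset.Icc 1 k, (if i - 1 ∈ T then N i else 0) = ∑ i ∈ T, N (i + 1) := by
    have himg : (Finset.Icc 1 k).filter (fun i => i - 1 ∈ T) = T.image (· + 1) := by
      ext i
      simp only [Finset.mem_filter, Finset.mem_Icc, Finset.mem_image]
      constructor
      · rintro ⟨⟨h1, h2⟩, h3⟩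
        exact ⟨i - 1, h3, by omega⟩
      · rintro ⟨j, hj, rfl⟩
        have := mem_Dset (hT hj)
        exact ⟨⟨by omega, by omega⟩, by simpa using hj⟩
    rw [← Finset.sum_filter, himg, Finset.sum_image (fun a _ b _ h => by omega)]
  rw [e1, e2] at hsum
  have e3 : ∑ i ∈ T, (N i - N (i + 1)) + ∑ i ∈ T, N (i + 1) = ∑ i ∈ T, N i := by
    rw [← Finset.sum_add_distrib]
    refine Finset.sum_congr rfl fun i hi => ?_
    have hd := mem_Dset (hT hi)
    exact Nat.sub_add_cancel (hmono i hd.1 (by omega))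
  omega

lemma lTerm_swap {N : ℕ → ℕ} (hmono : ∀ i, 1 ≤ i → i ≤ k → N (i + 1) ≤ N i)
    {T : Finset ℕ} {p : Fin k → Fin 2} (hT : T ⊆ Dset k p) :
    lTerm k N (swapF k T p) =
      lTerm k N p * Polynomial.X ^ (∑ i ∈ T, (N i - N (i + 1))) := by
  unfold lTerm
  rw [← pow_add, exp_swap hmono hT]

lemma sign_sum (s : Finset ℕ) :
    ∑ T ∈ s.powerset, (-1 : Polynomial ℤ) ^ T.card = if s = ∅ then 1 else 0 := by
  have h := Finset.sum_powerset_neg_one_pow_card (x := s)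
  have hcast : ((∑ T ∈ s.powerset, (-1 : ℤ) ^ T.card : ℤ) : Polynomial ℤ) =
      ∑ T ∈ s.powerset, (-1 : Polynomial ℤ) ^ T.card := by
    push_cast
    rfl
  rw [← hcast, h]
  split <;> simp

lemma lTerm_mul_deltaR {N : ℕ → ℕ} (hmono : ∀ i, 1 ≤ i → i ≤ k → N (i + 1) ≤ N i)
    (p' : Fin k → Fin 2) :
    lTerm k N p' * deltaR k N p' =
      ∑ T ∈ (Dset k p').powerset, (-1 : Polynomial ℤ) ^ T.card * lTerm k N (swapF k T p') := by
  classical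
  set c : ℕ → Polynomial ℤ := fun i =>
    if ext' k p' i = 0 ∧ ext' k p' (i + 1) = 1 then Polynomial.X ^ (N i - N (i + 1)) else 0
    with hc
  have h1 : deltaR k N p' =
      ∑ T ∈ (Finset.Icc 1 k).powerset, (-1 : Polynomial ℤ) ^ T.card * ∏ i ∈ T, c i := by
    unfold deltaR
    have hstep : ∀ i ∈ Finset.Icc 1 k,
        (1 - (if ext' k p' i = 0 ∧ ext' k p' (i + 1) = 1
            then Polynomial.X ^ (N i - N (i + 1)) else 0)) = (-c i) + 1 := fun i _ => by
      rw [hc]; ring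
    rw [Finset.prod_congr rfl hstep, Finset.prod_add]
    refine Finset.sum_congr rfl fun T hT => ?_
    rw [Finset.prod_const_one, mul_one]
    calc ∏ i ∈ T, -c i = ∏ i ∈ T, ((-1) * c i) := by
          exact Finset.prod_congr rfl fun i _ => by ring
    _ = (∏ _i ∈ T, (-1 : Polynomial ℤ)) * ∏ i ∈ T, c i := Finset.prod_mul_distrib
    _ = (-1 : Polynomial ℤ) ^ T.card * ∏ i ∈ T, c i := by rw [Finset.prod_const]
  rw [h1, Finset.mul_sum]
  have h2 : ∀ T ∈ (Finset.Icc 1 k).powerset,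
      lTerm k N p' * ((-1 : Polynomial ℤ) ^ T.card * ∏ i ∈ T, c i) =
      (-1 : Polynomial ℤ) ^ T.card * (lTerm k N p' * ∏ i ∈ T, c i) := fun T _ => by ring
  rw [Finset.sum_congr rfl h2]
  have hsub : (Dset k p').powerset ⊆ (Finset.Icc 1 k).powerset :=
    Finset.powerset_mono.mpr (Finset.filter_subset _ _)
  have hvan : ∀ T ∈ (Finset.Icc 1 k).powerset, T ∉ (Dset k p').powerset →
      (-1 : Polynomial ℤ) ^ T.card * (lTerm k N p' * ∏ i ∈ T, c i) = 0 := by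
    intro T hTIcc hTD
    rw [Finset.mem_powerset] at hTIcc hTD
    obtain ⟨i, hiT, hiD⟩ := Finset.not_subset.mp hTD
    have hci : c i = 0 := by
      rw [hc]
      simp only
      rw [if_neg]
      intro hcond
      exact hiD (Finset.mem_filter.mpr ⟨hTIcc hiT, hcond⟩)
    rw [Finset.prod_eq_zero hiT hci, mul_zero, mul_zero]
  rw [← Finset.sum_subset hsub hvan]
  refine Finset.sum_congr rfl fun T hT => ?_
  rw [Finset.mem_powerset] at hT
  have hprod : ∏ i ∈ T, c i = Polynomial.X ^ (∑ i ∈ T, (N i - N (i + 1))) := by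
    rw [← Finset.prod_pow_eq_pow_sum]
    refine Finset.prod_congr rfl fun i hi => ?_
    have hd := mem_Dset (hT hi)
    rw [hc]
    simp only
    rw [if_pos ⟨hd.2.2.1, hd.2.2.2⟩]
  rw [hprod, ← lTerm_swap hmono hT]

lemma ascent_of_memB {T : Finset ℕ} {q p : Fin k → Fin 2}
    (hones : onesCount k q = onesCount k p) (hT : T ⊆ Bset k q p) :
    ∀ i ∈ T, 1 ≤ i ∧ i + 1 ≤ k ∧ ext' k q i = 1 ∧ ext' k q (i + 1) = 0 := by
  intro i hi
  have hb := mem_Bset (hT hi)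
  refine ⟨hb.1, ?_, hb.2.2.1, hb.2.2.2.1⟩
  by_contra hc
  push_neg at hc
  have hik : i = k := by omega
  have hlt := hb.2.2.2.2
  rw [hik] at hlt
  have heq : psum k q k = psum k p k := by rw [← onesCount_eq, ← onesCount_eq, hones]
  omega

lemma Bset_nonempty {q p : Fin k → Fin 2} (h1 : onesCount k q = onesCount k p)
    (h2 : tle k q p) (hne : q ≠ p) : (Bset k q p).Nonempty := by
  classical
  have hk' : psum k q k = psum k p k := by rw [← onesCount_eq, ← onesCount_eq, h1]
  have hle : ∀ j, 1 ≤ j → j ≤ k → psum k p j ≤ psum k q j := fun j hj1 hj2 =>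
    h2 j (Finset.mem_Icc.mpr ⟨hj1, hj2⟩)
  have hex : ∃ j, psum k p j < psum k q j := by
    by_contra hc
    push_neg at hc
    apply hne
    apply eq_of_ext'
    have heq : ∀ j, j ≤ k → psum k q j = psum k p j := by
      intro j hj
      rcases Nat.eq_zero_or_pos j with rfl | hpos
      · rw [psum_zero, psum_zero]
      · exact le_antisymm (hc j) (hle j hpos hj)
    intro i hi1 hi2
    have ha := heq i hi2
    have hb := heq (i - 1) (by omega)
    have hsq := psum_succ q (i - 1)
    have hsp := psum_succ p (i - 1)
    rw [show i - 1 + 1 = i from by omega] at hsq hsp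
    omega
  let j0 := Nat.find hex
  have hj0 : psum k p j0 < psum k q j0 := Nat.find_spec hex
  have hmin : ∀ m, m < j0 → ¬(psum k p m < psum k q m) := fun m hm => Nat.find_min hex hm
  have hj01 : 1 ≤ j0 := by
    by_contra h
    push_neg at h
    have h0 : j0 = 0 := by omega
    rw [h0, psum_zero, psum_zero] at hj0
    omega
  have hj0k : j0 ≤ k := by
    by_contra h
    push_neg at h
    rw [psum_stab p (by omega), psum_stab q (by omega)] at hj0
    omega
  have hext1 : ext' k q j0 = 1 := by
    have hq := psum_succ q (j0 - 1)
    have hp := psum_succ p (j0 - 1)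
    rw [show j0 - 1 + 1 = j0 from by omega] at hq hp
    have hmm := hmin (j0 - 1) (by omega)
    have hle' : psum k p (j0 - 1) ≤ psum k q (j0 - 1) := by
      rcases Nat.eq_zero_or_pos (j0 - 1) with h0 | hpos
      · rw [h0, psum_zero, psum_zero]
      · exact hle _ hpos (by omega)
    have b1 := ext'_le_one q j0
    have b2 := ext'_le_one p j0
    omega
  have climb : ∀ d j, 1 ≤ j → j ≤ k → k - j ≤ d → ext' k q j = 1 →
      psum k p j < psum k q j → (Bset k q p).Nonempty := by
    intro d
    induction d with
    | zero =>
      intro j h1j h2j h3j h4j h5j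
      have hjk : j = k := by omega
      refine ⟨j, ?_⟩
      simp only [Bset, Finset.mem_filter, Finset.mem_Icc]
      exact ⟨⟨h1j, h2j⟩, h4j, by rw [hjk]; exact ext'_out q (by omega), h5j⟩
    | succ d ih =>
      intro j h1j h2j h3j h4j h5j
      by_cases hnext : ext' k q (j + 1) = 0
      · exact ⟨j, by
          simp only [Bset, Finset.mem_filter, Finset.mem_Icc]
          exact ⟨⟨h1j, h2j⟩, h4j, hnext, h5j⟩⟩
      · have hb := ext'_le_one q (j + 1)
        have h41 : ext' k q (j + 1) = 1 := by omega
        have hjk : j < k := by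
          by_contra h
          push_neg at h
          have := ext'_out q (i := j + 1) (by omega)
          omega
        have hq := psum_succ q j
        have hp := psum_succ p j
        have hbp := ext'_le_one p (j + 1)
        exact ih (j + 1) (by omega) (by omega) (by omega) h41 (by omega)
  exact climb k j0 hj01 hj0k (by omega) hext1 hj0
end StmtAux

open StmtAux in
/-- Lemma 3.11 (telescoping identity): `l_p(q) = ∑_{p' ≤ p, same number of ones} l_{p'}(q) δ¹_{p'}(q)`. -/
theorem stmt2 (k : ℕ) (hk : 1 ≤ k) (N : ℕ → ℕ)
    (hmono : ∀ i, 1 ≤ i → i ≤ k → N (i + 1) ≤ N i)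
    (hzero : ∀ i, k < i → N i = 0)
    (p : Fin k → Fin 2) :
    lTerm k N p =
      ∑ p' ∈ Finset.univ.filter
          (fun p' : Fin k → Fin 2 => onesCount k p' = onesCount k p ∧ tle k p' p),
        lTerm k N p' * deltaR k N p' := by
  classical
  symm
  set filt := Finset.univ.filter
      (fun p' : Fin k → Fin 2 => onesCount k p' = onesCount k p ∧ tle k p' p) with hfiltdef
  have hfilt : p ∈ filt := by
    rw [hfiltdef]
    exact Finset.mem_filter.mpr ⟨Finset.mem_univ _, rfl, fun j _ => le_refl _⟩
  have hmemfilt : ∀ q, q ∈ filt → onesCount k q = onesCount k p ∧ tle k q p := by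
    intro q hq
    rw [hfiltdef] at hq
    simpa using hq
  rw [Finset.sum_congr rfl (fun p' _ => lTerm_mul_deltaR hmono p')]
  rw [Finset.sum_sigma']
  have key : ∑ x ∈ filt.sigma (fun p' => (Dset k p').powerset),
        (-1 : Polynomial ℤ) ^ x.2.card * lTerm k N (swapF k x.2 x.1)
      = ∑ x ∈ filt.sigma (fun q => (Bset k q p).powerset),
        (-1 : Polynomial ℤ) ^ x.2.card * lTerm k N x.1 := by
    refine Finset.sum_nbij' (fun x => ⟨swapF k x.2 x.1, x.2⟩)
      (fun x => ⟨unswapF k x.2 x.1, x.2⟩) ?_ ?_ ?_ ?_ ?_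
    · rintro ⟨p', T⟩ hx
      simp only [Finset.mem_sigma, Finset.mem_powerset] at hx ⊢
      obtain ⟨hmem, hT⟩ := hx
      obtain ⟨hones, htle⟩ := hmemfilt p' hmem
      have hsw := psum_swapF hT
      have hkT : k ∉ T := fun h => by have := mem_Dset (hT h); omega
      constructor
      · rw [hfiltdef]
        simp only [Finset.mem_filter, Finset.mem_univ, true_and]
        constructor
        · have e1 := onesCount_eq (swapF k T p')
          have e2 := onesCount_eq p'
          have h5 := hsw k le_rfl
          rw [if_neg hkT] at h5
          omega
        · intro j hj
          have h5 := hsw j (Finset.mem_Icc.mp hj).2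
          have h6 : psum k p j ≤ psum k p' j := htle j hj
          have h7 : psum k p' j ≤ psum k (swapF k T p') j := by
            rw [h5]; split <;> omega
          exact le_trans h6 h7
      · intro i hi
        have hd := mem_Dset (hT hi)
        have hasc := swap_asc hT hi
        simp only [Bset, Finset.mem_filter, Finset.mem_Icc]
        refine ⟨⟨hd.1, by omega⟩, hasc.1, hasc.2, ?_⟩
        have h5 := hsw i (by omega)
        rw [if_pos hi] at h5
        have h6 : psum k p i ≤ psum k p' i :=
          htle i (Finset.mem_Icc.mpr ⟨hd.1, by omega⟩)
        omega
    · rintro ⟨q, T⟩ hx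
      simp only [Finset.mem_sigma, Finset.mem_powerset] at hx ⊢
      obtain ⟨hmem, hT⟩ := hx
      obtain ⟨hones, htle⟩ := hmemfilt q hmem
      have hA := ascent_of_memB hones hT
      have hD := unswap_desc hA
      have hswu := swap_unswap hA
      have hsw' := psum_swapF hD
      rw [hswu] at hsw'
      have hkT : k ∉ T := fun h => by have := hA k h; omega
      constructor
      · rw [hfiltdef]
        simp only [Finset.mem_filter, Finset.mem_univ, true_and]
        constructor
        · have e1 := onesCount_eq (unswapF k T q)
          have e2 := onesCount_eq q
          have h5 := hsw' k le_rfl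
          rw [if_neg hkT] at h5
          omega
        · intro j hj
          have h5 := hsw' j (Finset.mem_Icc.mp hj).2
          have h6 : psum k p j ≤ psum k q j := htle j hj
          show psum k p j ≤ psum k (unswapF k T q) j
          by_cases hjT : j ∈ T
          · have hb := mem_Bset (hT hjT)
            have h7 := hb.2.2.2.2
            rw [if_pos hjT] at h5
            omega
          · rw [if_neg hjT] at h5
            omega
      · exact hD
    · rintro ⟨p', T⟩ hx
      simp only [Finset.mem_sigma, Finset.mem_powerset] at hx
      exact congrArg (fun r => Sigma.mk (β := fun _ : Fin k → Fin 2 => Finset ℕ) r T)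
        (unswap_swap hx.2)
    · rintro ⟨q, T⟩ hx
      simp only [Finset.mem_sigma, Finset.mem_powerset] at hx
      obtain ⟨hmem, hT⟩ := hx
      obtain ⟨hones, _⟩ := hmemfilt q hmem
      exact congrArg (fun r => Sigma.mk (β := fun _ : Fin k → Fin 2 => Finset ℕ) r T)
        (swap_unswap (ascent_of_memB hones hT))
    · rintro ⟨p', T⟩ _
      rfl
  rw [key, Finset.sum_sigma]

  have inner : ∀ q ∈ filt,
      ∑ T ∈ (Bset k q p).powerset, (-1 : Polynomial ℤ) ^ T.card * lTerm k N q =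
      (if Bset k q p = ∅ then 1 else 0) * lTerm k N q := fun q _ => by
    rw [← Finset.sum_mul, sign_sum]
  rw [Finset.sum_congr rfl inner]
  rw [Finset.sum_eq_single_of_mem p hfilt ?side]
  case side =>
    intro q hq hne
    obtain ⟨hones, htle⟩ := hmemfilt q hq
    rw [if_neg (Finset.nonempty_iff_ne_empty.mp (Bset_nonempty hones htle hne)), zero_mul]
  rw [if_pos, one_mul]
  refine Finset.eq_empty_of_forall_notMem fun i hi => ?_
  exact absurd (mem_Bset hi).2.2.2.2 (lt_irrefl _)
end

section
/- Fix k ≥ 1, integers N_{2,k} ≥ ... ≥ N_{2,1} ≥ 0 with convention N_{2,0} = 0. For p ∈ {0,1}^k define l^2_p(q) = q^{∑_{i=1}^k p_i N_{2,i}} and δ^2_p(q) = ∏_{i=1}^k (1 - [p_i = 0 and p_{i-1} = 1] · q^{N_{2,i} - N_{2,i-1}}) (with p_0 := 0). Let ≥ be the partial order on binary k-tuples with the same number of ones given by p' ≥ p iff ∑_{i=1}^j p'_i ≤ ∑_{i=1}^j p_i for all j. Then for every p ∈ {0,1}^k: l^2_p(q) = ∑_{p' ≥ p, p' with the same number of ones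 as p} l^2_{p'}(q) · δ^2_{p'}(q). -/
open Finset Polynomial

-- Auxiliary lemmas
lemma ext'_le_one (k : ℕ) (p : Fin k → Fin 2) (i : ℕ) : ext' k p i ≤ 1 := by
  unfold ext'
  split
  · exact Nat.lt_succ_iff.mp (p _).isLt
  · exact Nat.zero_le 1

lemma ext'_snoc (k : ℕ) (r : Fin k → Fin 2) (b : Fin 2) (i : ℕ) :
    ext' (k+1) (Fin.snoc r b) i = if i = k+1 then (b : ℕ) else ext' k r i := by
  unfold ext'
  by_cases h1 : i = k + 1
  · subst h1
    simp only [if_pos rfl]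
    rw [dif_pos ⟨by omega, le_refl _⟩]
    have : (⟨k + 1 - 1, by omega⟩ : Fin (k+1)) = Fin.last k := by ext; simp
    rw [this, Fin.snoc_last]
    simp
  · rw [if_neg h1]
    by_cases h2 : 1 ≤ i ∧ i ≤ k
    · rw [dif_pos ⟨h2.1, by omega⟩, dif_pos h2]
      have : (⟨i - 1, by omega⟩ : Fin (k+1)) = Fin.castSucc ⟨i - 1, by omega⟩ := rfl
      rw [this, Fin.snoc_castSucc]
    · rw [dif_neg (by omega), dif_neg h2]

def psum (k : ℕ) (p : Fin k → Fin 2) (j : ℕ) : ℕ := ∑ i ∈ Finset.Icc 1 j, ext' k p i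

lemma ext'_val (k : ℕ) (p : Fin k → Fin 2) (i : Fin k) : ext' k p (i.val + 1) = (p i : ℕ) := by
  unfold ext'
  rw [dif_pos ⟨by omega, by omega⟩]
  congr 1

lemma psum_succ (k : ℕ) (p : Fin k → Fin 2) (j : ℕ) :
    psum k p (j+1) = psum k p j + ext' k p (j+1) := by
  unfold psum
  rw [Finset.sum_Icc_succ_top (by omega)]

lemma psum_mono (k : ℕ) (p : Fin k → Fin 2) {j j' : ℕ} (h : j ≤ j') :
    psum k p j ≤ psum k p j' :=
  Finset.sum_le_sum_of_subset (Finset.Icc_subset_Icc_right h)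

lemma psum_split (k : ℕ) (p : Fin k → Fin 2) {j m : ℕ} (h : j ≤ m) :
    psum k p m = psum k p j + ∑ i ∈ Finset.Icc (j+1) m, ext' k p i := by
  unfold psum
  rw [Finset.Icc_add_one_left_eq_Ioc, show (1:ℕ) = 0 + 1 from rfl, Finset.Icc_add_one_left_eq_Ioc,
    Finset.Icc_add_one_left_eq_Ioc,
    Finset.sum_Ioc_consecutive _ (Nat.zero_le j) h]

lemma onesCount_eq (k : ℕ) (p : Fin k → Fin 2) : onesCount k p = psum k p k := by
  unfold onesCount psum
  rw [← Finset.Ico_add_one_right_eq_Icc, Finset.sum_Ico_eq_sum_range]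
  have := Fin.sum_univ_eq_sum_range (fun i => ext' k p (i+1)) k
  simp only [ext'_val] at this
  rw [this]
  apply Finset.sum_congr rfl
  intro i _
  rw [Nat.add_comm 1 i]

lemma tle_iff (k : ℕ) (p1 p2 : Fin k → Fin 2) :
    tle k p1 p2 ↔ ∀ j ∈ Finset.Icc 1 k, psum k p2 j ≤ psum k p1 j := Iff.rfl

lemma psum_snoc (k : ℕ) (r : Fin k → Fin 2) (b : Fin 2) {j : ℕ} (h : j ≤ k) :
    psum (k+1) (Fin.snoc r b) j = psum k r j := by
  unfold psum
  apply Finset.sum_congr rfl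
  intro i hi
  simp only [Finset.mem_Icc] at hi
  rw [ext'_snoc, if_neg (by omega)]

lemma psum_snoc_top (k : ℕ) (r : Fin k → Fin 2) (b : Fin 2) :
    psum (k+1) (Fin.snoc r b) (k+1) = psum k r k + (b : ℕ) := by
  rw [psum_succ, psum_snoc k r b le_rfl, ext'_snoc, if_pos rfl]

lemma onesCount_snoc (k : ℕ) (r : Fin k → Fin 2) (b : Fin 2) :
    onesCount (k+1) (Fin.snoc r b) = onesCount k r + (b : ℕ) := by
  rw [onesCount_eq, psum_snoc_top, onesCount_eq]

lemma lTerm_snoc (k : ℕ) (N : ℕ → ℕ) (r : Fin k → Fin 2) (b : Fin 2) :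
    lTerm (k+1) N (Fin.snoc r b) = lTerm k N r * Polynomial.X ^ ((b : ℕ) * N (k+1)) := by
  unfold lTerm
  rw [← pow_add]
  congr 1
  rw [Finset.sum_Icc_succ_top (by omega : 1 ≤ k+1), ext'_snoc, if_pos rfl]
  congr 1
  apply Finset.sum_congr rfl
  intro i hi
  simp only [Finset.mem_Icc] at hi
  rw [ext'_snoc, if_neg (by omega)]

lemma deltaL_snoc (k : ℕ) (N : ℕ → ℕ) (r : Fin k → Fin 2) (b : Fin 2) :
    deltaL (k+1) N (Fin.snoc r b) = deltaL k N r *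
      (1 - if (b : ℕ) = 0 ∧ ext' k r k = 1 then Polynomial.X ^ (N (k+1) - N k) else 0) := by
  unfold deltaL
  rw [Finset.prod_Icc_succ_top (by omega : 1 ≤ k+1)]
  congr 1
  · apply Finset.prod_congr rfl
    intro i hi
    simp only [Finset.mem_Icc] at hi
    have e1 : ext' (k+1) (Fin.snoc r b) i = ext' k r i := by
      rw [ext'_snoc, if_neg (by omega)]
    have e2 : ext' (k+1) (Fin.snoc r b) (i-1) = ext' k r (i-1) := by
      rw [ext'_snoc, if_neg (by omega)]
    rw [e1, e2]
  · have e1 : ext' (k+1) (Fin.snoc r b) (k+1) = (b : ℕ) := by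
      rw [ext'_snoc, if_pos rfl]
    have e2 : ext' (k+1) (Fin.snoc r b) (k+1-1) = ext' k r k := by
      rw [Nat.add_sub_cancel, ext'_snoc, if_neg (by omega)]
    rw [Nat.add_sub_cancel] at e2
    rw [Nat.add_sub_cancel, e1, e2]

lemma ext'_big (k : ℕ) (p : Fin k → Fin 2) {i : ℕ} (h : k < i) : ext' k p i = 0 := by
  unfold ext'; rw [dif_neg (by omega)]

lemma psum_update (k : ℕ) (x y : Fin k → Fin 2) (t : ℕ) (ht1 : 1 ≤ t) (ht2 : t ≤ k)
    (hxy : ∀ i, i ≠ t → ext' k x i = ext' k y i)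
    (hx : ext' k x t = 1) (hy : ext' k y t = 0) (j : ℕ) :
    psum k x j = psum k y j + (if t ≤ j then 1 else 0) := by
  unfold psum
  by_cases h : t ≤ j
  · rw [if_pos h]
    have hmem : t ∈ Finset.Icc 1 j := Finset.mem_Icc.mpr ⟨ht1, h⟩
    rw [Finset.sum_eq_sum_sdiff_singleton_add hmem, Finset.sum_eq_sum_sdiff_singleton_add hmem,
      hx, hy]
    have : ∑ i ∈ Finset.Icc 1 j \ {t}, ext' k x i = ∑ i ∈ Finset.Icc 1 j \ {t}, ext' k y i := by
      apply Finset.sum_congr rfl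
      intro i hi
      simp only [Finset.mem_sdiff, Finset.mem_singleton] at hi
      exact hxy i hi.2
    omega
  · rw [if_neg h, Nat.add_zero]
    apply Finset.sum_congr rfl
    intro i hi
    simp only [Finset.mem_Icc] at hi
    exact hxy i (by omega)

lemma psum_zero (k : ℕ) (p : Fin k → Fin 2) : psum k p 0 = 0 := by
  simp [psum]

lemma ext'_zero (k : ℕ) (p : Fin k → Fin 2) : ext' k p 0 = 0 := by
  unfold ext'; rw [dif_neg (by omega)]

lemma exists_pt (k : ℕ) (a : Fin k → Fin 2) (h1 : 1 ≤ onesCount k a) :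
    ∃ pt pu : Fin k → Fin 2,
      (∀ r, (onesCount k r + 1 = onesCount k a ∧ tle k a r) ↔
            (onesCount k r = onesCount k pt ∧ tle k pt r)) ∧
      (∀ r, (onesCount k r = onesCount k a ∧ tle k a r ∧ ext' k r k = 1) ↔
            (onesCount k r = onesCount k pu ∧ tle k pu r)) ∧
      (∀ N : ℕ → ℕ, lTerm k N pu = Polynomial.X ^ (N k) * lTerm k N pt) := by
  have hk : 1 ≤ k := by
    by_contra h
    have hk0 : k = 0 := by omega
    subst hk0
    rw [onesCount_eq, psum_zero] at h1
    omega
  have hke : k - 1 + 1 = k := by omega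
  have hSpos : psum k a k ≠ 0 := by rw [← onesCount_eq]; omega
  set T := (Finset.Icc 1 k).filter (fun i => ext' k a i = 1) with hT
  have hne : T.Nonempty := by
    obtain ⟨i, hi, hine⟩ := Finset.exists_ne_zero_of_sum_ne_zero hSpos
    refine ⟨i, Finset.mem_filter.mpr ⟨hi, ?_⟩⟩
    have := ext'_le_one k a i
    omega
  set t := T.max' hne with htdef
  have htmem : t ∈ T := T.max'_mem hne
  rw [hT, Finset.mem_filter, Finset.mem_Icc] at htmem
  obtain ⟨⟨ht1, ht2⟩, hat⟩ := htmem
  have hmax : ∀ i, t < i → ext' k a i = 0 := by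
    intro i hi
    by_cases hik : i ≤ k
    · by_contra hne0
      have h1' : ext' k a i = 1 := by have := ext'_le_one k a i; omega
      have hi1 : 1 ≤ i := by
        by_contra h0
        have : i = 0 := by omega
        subst this
        rw [ext'_zero] at h1'
        omega
      have hitT : i ∈ T := by
        rw [hT, Finset.mem_filter, Finset.mem_Icc]
        exact ⟨⟨hi1, hik⟩, h1'⟩
      have := T.le_max' i hitT
      omega
    · exact ext'_big k a (by omega)
  set pt : Fin k → Fin 2 := fun i => if (i : ℕ) + 1 = t then 0 else a i with hptdef
  set pu : Fin k → Fin 2 := fun i => if (i : ℕ) + 1 = k then 1 else pt i with hpudef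
  have ext_pt : ∀ i, ext' k pt i = if i = t then 0 else ext' k a i := by
    intro i
    by_cases h : 1 ≤ i ∧ i ≤ k
    · rw [ext', dif_pos h, ext', dif_pos h, hptdef]
      simp only
      rw [apply_ite (Fin.val : Fin 2 → ℕ)]
      have heq : ((⟨i - 1, by omega⟩ : Fin k) : ℕ) + 1 = t ↔ i = t := by simp; omega
      by_cases hit : i = t
      · rw [if_pos (heq.mpr hit), if_pos hit]; rfl
      · rw [if_neg (fun hh => hit (heq.mp hh)), if_neg hit]
    · rw [ext', dif_neg h, ext', dif_neg h]
      simp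
  have ext_pu : ∀ i, ext' k pu i = if i = k then 1 else ext' k pt i := by
    intro i
    by_cases h : 1 ≤ i ∧ i ≤ k
    · rw [ext', dif_pos h, ext', dif_pos h, hpudef]
      simp only
      rw [apply_ite (Fin.val : Fin 2 → ℕ)]
      have heq : ((⟨i - 1, by omega⟩ : Fin k) : ℕ) + 1 = k ↔ i = k := by simp; omega
      by_cases hik : i = k
      · rw [if_pos (heq.mpr hik), if_pos hik]; rfl
      · rw [if_neg (fun hh => hik (heq.mp hh)), if_neg hik]
    · rw [ext', dif_neg h, ext', dif_neg h, if_neg (by omega)]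
  have hptk : ext' k pt k = 0 := by
    rw [ext_pt]
    by_cases h : k = t
    · rw [if_pos h]
    · rw [if_neg h]
      exact hmax k (by omega)
  have F1 : ∀ j, psum k a j = psum k pt j + (if t ≤ j then 1 else 0) := by
    intro j
    apply psum_update k a pt t ht1 ht2 _ hat (by rw [ext_pt, if_pos rfl])
    intro i hi
    rw [ext_pt, if_neg hi]
  have F2 : ∀ j, psum k pu j = psum k pt j + (if k ≤ j then 1 else 0) := by
    intro j
    apply psum_update k pu pt k hk le_rfl _ (by rw [ext_pu, if_pos rfl]) hptk
    intro i hi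
    rw [ext_pu, if_neg hi]
  have F3 : ∀ j, t ≤ j → j ≤ k → psum k a j = psum k a k := by
    intro j hj1 hj2
    rw [psum_split k a hj2]
    have hz : ∑ i ∈ Finset.Icc (j+1) k, ext' k a i = 0 := by
      apply Finset.sum_eq_zero
      intro i hi
      simp only [Finset.mem_Icc] at hi
      exact hmax i (by omega)
    omega
  have hSpt : onesCount k pt + 1 = onesCount k a := by
    have h2 := F1 k
    rw [if_pos ht2] at h2
    rw [onesCount_eq, onesCount_eq]
    omega
  have hSpu : onesCount k pu = onesCount k a := by
    have h2 := F2 k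
    rw [if_pos le_rfl] at h2
    have h3 := F1 k
    rw [if_pos ht2] at h3
    rw [onesCount_eq, onesCount_eq]
    omega
  refine ⟨pt, pu, ?_, ?_, ?_⟩
  · intro r
    constructor
    · rintro ⟨hc, htle⟩
      refine ⟨by omega, ?_⟩
      intro j hj
      rw [Finset.mem_Icc] at hj
      show psum k r j ≤ psum k pt j
      have h1' : psum k r j ≤ psum k a j := htle j (Finset.mem_Icc.mpr hj)
      have h2 := F1 j
      by_cases hjt : t ≤ j
      · have h3 := F3 j hjt hj.2
        have h4 : psum k r j ≤ psum k r k := psum_mono k r hj.2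
        have h5 : onesCount k r = psum k r k := onesCount_eq k r
        have h6 : onesCount k a = psum k a k := onesCount_eq k a
        rw [if_pos hjt] at h2
        omega
      · rw [if_neg hjt] at h2
        omega
    · rintro ⟨hc, htle⟩
      refine ⟨by omega, ?_⟩
      intro j hj
      have h1' : psum k r j ≤ psum k pt j := htle j hj
      have h2 := F1 j
      show psum k r j ≤ psum k a j
      omega
  · intro r
    constructor
    · rintro ⟨hc, htle, hrk⟩
      refine ⟨by omega, ?_⟩
      intro j hj
      rw [Finset.mem_Icc] at hj
      show psum k r j ≤ psum k pu j
      have h2 := F2 j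
      by_cases hjk : j = k
      · rw [hjk]
        have h5 : onesCount k r = psum k r k := onesCount_eq k r
        have h10 : onesCount k pu = psum k pu k := onesCount_eq k pu
        omega
      · rw [if_neg (by omega)] at h2
        have h1' : psum k r j ≤ psum k a j := htle j (Finset.mem_Icc.mpr hj)
        have h3 := F1 j
        by_cases hjt : t ≤ j
        · have h4 := F3 j hjt hj.2
          have h5 : psum k r j ≤ psum k r (k-1) := psum_mono k r (by omega)
          have h6 : psum k r k = psum k r (k-1) + ext' k r k := by
            have hh := psum_succ k r (k-1)
            rwa [hke] at hh
          have h7 : onesCount k r = psum k r k := onesCount_eq k r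
          have h8 : onesCount k a = psum k a k := onesCount_eq k a
          rw [if_pos hjt] at h3
          omega
        · rw [if_neg hjt] at h3
          omega
    · rintro ⟨hc, htle⟩
      have hrk : ext' k r k = 1 := by
        have h5 : psum k r k = psum k r (k-1) + ext' k r k := by
          have hh := psum_succ k r (k-1)
          rwa [hke] at hh
        have h6 : psum k pt (k-1) ≤ psum k pt k := psum_mono k pt (by omega)
        have h2 := F2 (k-1)
        rw [if_neg (by omega)] at h2
        have h7 := ext'_le_one k r k
        have h8 : psum k r (k-1) ≤ psum k pu (k-1) := by
          rcases Nat.eq_zero_or_pos (k-1) with h | h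
          · rw [h, psum_zero, psum_zero]
          · exact htle (k-1) (Finset.mem_Icc.mpr ⟨h, by omega⟩)
        have h9 : onesCount k r = psum k r k := onesCount_eq k r
        have h10 : onesCount k pu = psum k pu k := onesCount_eq k pu
        have h11 : onesCount k pt = psum k pt k := onesCount_eq k pt
        omega
      refine ⟨by omega, ?_, hrk⟩
      intro j hj
      rw [Finset.mem_Icc] at hj
      show psum k r j ≤ psum k a j
      have h1' : psum k r j ≤ psum k pu j := htle j (Finset.mem_Icc.mpr hj)
      have h2 := F2 j
      have h3 := F1 j
      by_cases hjk : j = k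
      · rw [hjk]
        have h5 : onesCount k pu = psum k pu k := onesCount_eq k pu
        have h7 : onesCount k a = psum k a k := onesCount_eq k a
        have h8 : psum k r j ≤ psum k r k := psum_mono k r (by omega)
        have h9 : onesCount k r = psum k r k := onesCount_eq k r
        omega
      · rw [if_neg (by omega)] at h2
        omega
  · intro N
    unfold lTerm
    rw [← pow_add]
    congr 1
    have hkmem : k ∈ Finset.Icc 1 k := Finset.mem_Icc.mpr ⟨hk, le_rfl⟩
    rw [Finset.sum_eq_sum_sdiff_singleton_add hkmem, Finset.sum_eq_sum_sdiff_singleton_add hkmem]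
    have e1 : ext' k pu k * N k = N k := by rw [ext_pu, if_pos rfl, one_mul]
    have e2 : ext' k pt k * N k = 0 := by rw [hptk, zero_mul]
    have e3 : ∑ i ∈ Finset.Icc 1 k \ {k}, ext' k pu i * N i
         = ∑ i ∈ Finset.Icc 1 k \ {k}, ext' k pt i * N i := by
      apply Finset.sum_congr rfl
      intro i hi
      simp only [Finset.mem_sdiff, Finset.mem_singleton] at hi
      rw [ext_pu, if_neg hi.2]
    rw [e1, e2, e3]
    omega

lemma tle_snoc (k : ℕ) (a r : Fin k → Fin 2) (c b : Fin 2) :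
    tle (k+1) (Fin.snoc a c) (Fin.snoc r b) ↔
      (tle k a r ∧ onesCount k r + (b : ℕ) ≤ onesCount k a + (c : ℕ)) := by
  constructor
  · intro h
    constructor
    · intro j hj
      rw [Finset.mem_Icc] at hj
      show psum k r j ≤ psum k a j
      have h0 : psum (k+1) (Fin.snoc r b) j ≤ psum (k+1) (Fin.snoc a c) j :=
        h j (Finset.mem_Icc.mpr ⟨hj.1, by omega⟩)
      rw [psum_snoc k r b hj.2, psum_snoc k a c hj.2] at h0
      exact h0
    · have h0 : psum (k+1) (Fin.snoc r b) (k+1) ≤ psum (k+1) (Fin.snoc a c) (k+1) :=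
        h (k+1) (Finset.mem_Icc.mpr ⟨by omega, le_rfl⟩)
      rw [psum_snoc_top, psum_snoc_top] at h0
      rw [onesCount_eq, onesCount_eq]
      exact h0
  · rintro ⟨h1, h2⟩ j hj
    rw [Finset.mem_Icc] at hj
    show psum (k+1) (Fin.snoc r b) j ≤ psum (k+1) (Fin.snoc a c) j
    by_cases hjk : j ≤ k
    · rw [psum_snoc k r b hjk, psum_snoc k a c hjk]
      exact h1 j (Finset.mem_Icc.mpr ⟨hj.1, hjk⟩)
    · have hj1 : j = k + 1 := by omega
      subst hj1
      rw [psum_snoc_top, psum_snoc_top]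
      rw [onesCount_eq, onesCount_eq] at h2
      exact h2

lemma cond_snoc (k : ℕ) (a r : Fin k → Fin 2) (c b : Fin 2) :
    (onesCount (k+1) (Fin.snoc r b) = onesCount (k+1) (Fin.snoc a c) ∧
      tle (k+1) (Fin.snoc a c) (Fin.snoc r b)) ↔
    (onesCount k r + (b : ℕ) = onesCount k a + (c : ℕ) ∧ tle k a r) := by
  rw [onesCount_snoc, onesCount_snoc, tle_snoc]
  constructor
  · rintro ⟨h1, h2, _⟩
    exact ⟨h1, h2⟩
  · rintro ⟨h1, h2⟩
    exact ⟨h1, h2, by omega⟩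

lemma ext'_le_psum (k : ℕ) (r : Fin k → Fin 2) : ext' k r k ≤ psum k r k := by
  rcases Nat.eq_zero_or_pos k with h | h
  · subst h
    rw [ext'_zero, psum_zero]
  · exact Finset.single_le_sum (f := fun i => ext' k r i) (fun i _ => Nat.zero_le _)
      (Finset.mem_Icc.mpr ⟨h, le_rfl⟩)

theorem aux : ∀ (k : ℕ) (N : ℕ → ℕ),
    (∀ i, 1 ≤ i → i < k → N i ≤ N (i + 1)) → N 0 = 0 →
    ∀ p : Fin k → Fin 2,
    lTerm k N p = ∑ p' ∈ Finset.univ.filter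
        (fun p' : Fin k → Fin 2 => onesCount k p' = onesCount k p ∧ tle k p p'),
      lTerm k N p' * deltaL k N p' := by
  intro k
  induction k with
  | zero =>
    intro N _ _ p
    have he : Finset.Icc 1 0 = (∅ : Finset ℕ) := by decide
    have hval : ∀ p' : Fin 0 → Fin 2, lTerm 0 N p' * deltaL 0 N p' = 1 := by
      intro p'
      rw [lTerm, deltaL, he]
      simp
    have hfil : (Finset.univ.filter
        (fun p' : Fin 0 → Fin 2 => onesCount 0 p' = onesCount 0 p ∧ tle 0 p p')) = {p} := by
      apply Finset.eq_singleton_iff_unique_mem.mpr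
      constructor
      · refine Finset.mem_filter.mpr ⟨Finset.mem_univ _, rfl, ?_⟩
        intro j hj
        rw [he] at hj
      · intro x _
        exact Subsingleton.elim x p
    rw [hfil, Finset.sum_singleton, hval]
    rw [lTerm, he]
    simp
  | succ k IH =>
    intro N hmono hzero p
    have hd : N k ≤ N (k+1) := by
      rcases Nat.eq_zero_or_pos k with h | h
      · rw [h, hzero]
        exact Nat.zero_le _
      · exact hmono k h (by omega)
    have IH' : ∀ x : Fin k → Fin 2, lTerm k N x =
        ∑ r : Fin k → Fin 2, if onesCount k r = onesCount k x ∧ tle k x r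
          then lTerm k N r * deltaL k N r else 0 := by
      intro x
      rw [IH N (fun i h1 h2 => hmono i h1 (by omega)) hzero x, Finset.sum_filter]
    have tle_count : ∀ x r : Fin k → Fin 2, tle k x r → onesCount k r ≤ onesCount k x := by
      intro x r h
      rcases Nat.eq_zero_or_pos k with hk0 | hk0
      · subst hk0
        rw [onesCount_eq, onesCount_eq, psum_zero, psum_zero]
      · have := h k (Finset.mem_Icc.mpr ⟨hk0, le_rfl⟩)
        rw [onesCount_eq, onesCount_eq]
        exact this
    set E : (Fin k → Fin 2) × Fin 2 ≃ (Fin (k+1) → Fin 2) :=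
      ⟨fun x => Fin.snoc x.1 x.2, fun q => (Fin.init q, q (Fin.last k)),
       fun x => by simp, fun q => by simp⟩ with hE
    have hsum : ∀ f : (Fin (k+1) → Fin 2) → Polynomial ℤ,
        ∑ q : Fin (k+1) → Fin 2, f q
          = ∑ r : Fin k → Fin 2, (f (Fin.snoc r 0) + f (Fin.snoc r 1)) := by
      intro f
      rw [← Equiv.sum_comp E f, Fintype.sum_prod_type]
      apply Finset.sum_congr rfl
      intro r _
      exact Fin.sum_univ_two _
    have hp : Fin.snoc (Fin.init p) (p (Fin.last k)) = p := Fin.snoc_init_self p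
    set a := Fin.init p with ha
    set c := p (Fin.last k) with hc
    rw [← hp, Finset.sum_filter, hsum]
    have hval : ∀ (r : Fin k → Fin 2) (b : Fin 2),
        lTerm (k+1) N (Fin.snoc r b) * deltaL (k+1) N (Fin.snoc r b)
          = lTerm k N r * deltaL k N r * Polynomial.X ^ ((b : ℕ) * N (k+1)) *
            (1 - if (b : ℕ) = 0 ∧ ext' k r k = 1
                 then Polynomial.X ^ (N (k+1) - N k) else 0) := by
      intro r b
      rw [lTerm_snoc, deltaL_snoc]
      ring
    have hc2 : c = 0 ∨ c = 1 := by
      rcases c with ⟨cv, hcv⟩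
      interval_cases cv
      · left; rfl
      · right; rfl
    rcases hc2 with hc1 | hc1
    · -- c = 0
      rw [hc1]
      rw [Finset.sum_add_distrib]
      have hT1 : ∑ r : Fin k → Fin 2,
          (if onesCount (k+1) (Fin.snoc r 1) = onesCount (k+1) (Fin.snoc a 0) ∧
              tle (k+1) (Fin.snoc a 0) (Fin.snoc r 1)
           then lTerm (k+1) N (Fin.snoc r 1) * deltaL (k+1) N (Fin.snoc r 1) else 0)
          = Polynomial.X ^ (N (k+1)) * ∑ r : Fin k → Fin 2,
            (if onesCount k r + 1 = onesCount k a ∧ tle k a r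
             then lTerm k N r * deltaL k N r else 0) := by
        rw [Finset.mul_sum]
        apply Finset.sum_congr rfl
        intro r _
        rw [if_congr (cond_snoc k a r 0 1) (hval r 1) rfl]
        simp only [Fin.val_one, Fin.val_zero, Nat.add_zero, one_mul]
        rw [if_neg (by omega : ¬((1:ℕ) = 0 ∧ ext' k r k = 1))]
        by_cases h : onesCount k r + 1 = onesCount k a ∧ tle k a r
        · rw [if_pos h, if_pos h]
          ring
        · rw [if_neg h, if_neg h, mul_zero]
      have hT0 : ∑ r : Fin k → Fin 2,
          (if onesCount (k+1) (Fin.snoc r 0) = onesCount (k+1) (Fin.snoc a 0) ∧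
              tle (k+1) (Fin.snoc a 0) (Fin.snoc r 0)
           then lTerm (k+1) N (Fin.snoc r 0) * deltaL (k+1) N (Fin.snoc r 0) else 0)
          = (∑ r : Fin k → Fin 2,
              (if onesCount k r = onesCount k a ∧ tle k a r
               then lTerm k N r * deltaL k N r else 0))
            - (∑ r : Fin k → Fin 2,
              (if (onesCount k r = onesCount k a ∧ tle k a r) ∧ ext' k r k = 1
               then lTerm k N r * deltaL k N r * Polynomial.X ^ (N (k+1) - N k) else 0)) := by
        rw [← Finset.sum_sub_distrib]
        apply Finset.sum_congr rfl
        intro r _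
        rw [if_congr (cond_snoc k a r 0 0) (hval r 0) rfl]
        simp only [Fin.val_zero, Nat.add_zero, Nat.zero_mul, pow_zero, mul_one, true_and,
          eq_self_iff_true]
        by_cases h1 : onesCount k r = onesCount k a ∧ tle k a r
        · rw [if_pos h1, if_pos h1]
          by_cases h2 : ext' k r k = 1
          · rw [if_pos h2, if_pos ⟨h1, h2⟩]
            ring
          · rw [if_neg h2, if_neg (by tauto)]
            ring
        · rw [if_neg h1, if_neg h1, if_neg (by tauto)]
          ring
      rw [hT0, hT1]
      by_cases hS : 1 ≤ onesCount k a
      · obtain ⟨pt, pu, E2, E1, hL⟩ := exists_pt k a hS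
        have hpu : ∑ r : Fin k → Fin 2,
            (if (onesCount k r = onesCount k a ∧ tle k a r) ∧ ext' k r k = 1
             then lTerm k N r * deltaL k N r * Polynomial.X ^ (N (k+1) - N k) else 0)
            = lTerm k N pu * Polynomial.X ^ (N (k+1) - N k) := by
          rw [IH' pu, Finset.sum_mul]
          apply Finset.sum_congr rfl
          intro r _
          have hiff : ((onesCount k r = onesCount k a ∧ tle k a r) ∧ ext' k r k = 1) ↔
              (onesCount k r = onesCount k pu ∧ tle k pu r) := by
            rw [and_assoc]
            exact E1 r
          rw [if_congr hiff rfl rfl, ite_mul, zero_mul]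
        have hptL : ∑ r : Fin k → Fin 2,
            (if onesCount k r + 1 = onesCount k a ∧ tle k a r
             then lTerm k N r * deltaL k N r else 0) = lTerm k N pt := by
          rw [IH' pt]
          apply Finset.sum_congr rfl
          intro r _
          rw [if_congr (E2 r) rfl rfl]
        rw [hpu, hptL, ← IH' a, lTerm_snoc, hL N]
        have hpow : Polynomial.X ^ (N k) * lTerm k N pt * Polynomial.X ^ (N (k+1) - N k)
            = lTerm k N pt * Polynomial.X ^ (N (k+1)) := by
          rw [mul_comm (Polynomial.X ^ (N k)) (lTerm k N pt), mul_assoc, ← pow_add]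
          congr 2
          omega
        rw [hpow]
        simp only [Fin.val_zero, Nat.zero_mul, pow_zero, mul_one]
        ring
      · have hz1 : ∑ r : Fin k → Fin 2,
            (if (onesCount k r = onesCount k a ∧ tle k a r) ∧ ext' k r k = 1
             then lTerm k N r * deltaL k N r * Polynomial.X ^ (N (k+1) - N k) else 0) = 0 := by
          apply Finset.sum_eq_zero
          intro r _
          rw [if_neg]
          rintro ⟨⟨h1, _⟩, h2⟩
          have h3 := ext'_le_psum k r
          have h4 : onesCount k r = psum k r k := onesCount_eq k r
          omega
        have hz2 : ∑ r : Fin k → Fin 2,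
            (if onesCount k r + 1 = onesCount k a ∧ tle k a r
             then lTerm k N r * deltaL k N r else 0) = 0 := by
          apply Finset.sum_eq_zero
          intro r _
          rw [if_neg]
          rintro ⟨h1, h2⟩
          have := tle_count a r h2
          omega
        rw [hz1, hz2, ← IH' a, lTerm_snoc]
        simp only [Fin.val_zero, Nat.zero_mul, pow_zero, mul_one, mul_zero]
        ring
    · -- c = 1
      rw [hc1, Finset.sum_add_distrib]
      have hT0 : ∑ r : Fin k → Fin 2,
          (if onesCount (k+1) (Fin.snoc r 0) = onesCount (k+1) (Fin.snoc a 1) ∧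
              tle (k+1) (Fin.snoc a 1) (Fin.snoc r 0)
           then lTerm (k+1) N (Fin.snoc r 0) * deltaL (k+1) N (Fin.snoc r 0) else 0)
          = 0 := by
        apply Finset.sum_eq_zero
        intro r _
        rw [if_congr (cond_snoc k a r 1 0) rfl rfl, if_neg]
        rintro ⟨h1, h2⟩
        have := tle_count a r h2
        simp only [Fin.val_zero, Fin.val_one] at h1
        omega
      have hT1 : ∑ r : Fin k → Fin 2,
          (if onesCount (k+1) (Fin.snoc r 1) = onesCount (k+1) (Fin.snoc a 1) ∧
              tle (k+1) (Fin.snoc a 1) (Fin.snoc r 1)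
           then lTerm (k+1) N (Fin.snoc r 1) * deltaL (k+1) N (Fin.snoc r 1) else 0)
          = Polynomial.X ^ (N (k+1)) * ∑ r : Fin k → Fin 2,
            (if onesCount k r = onesCount k a ∧ tle k a r
             then lTerm k N r * deltaL k N r else 0) := by
        rw [Finset.mul_sum]
        apply Finset.sum_congr rfl
        intro r _
        have hiff : (onesCount k r + ((1:Fin 2):ℕ) = onesCount k a + ((1:Fin 2):ℕ) ∧ tle k a r)
            ↔ (onesCount k r = onesCount k a ∧ tle k a r) := by
          simp only [Fin.val_one]
          constructor
          · rintro ⟨h1, h2⟩; exact ⟨by omega, h2⟩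
          · rintro ⟨h1, h2⟩; exact ⟨by omega, h2⟩
        rw [if_congr ((cond_snoc k a r 1 1).trans hiff) (hval r 1) rfl]
        simp only [Fin.val_one, one_mul]
        rw [if_neg (by omega : ¬((1:ℕ) = 0 ∧ ext' k r k = 1))]
        by_cases h : onesCount k r = onesCount k a ∧ tle k a r
        · rw [if_pos h, if_pos h]
          ring
        · rw [if_neg h, if_neg h, mul_zero]
      rw [hT0, hT1, ← IH' a, lTerm_snoc]
      simp only [Fin.val_one, one_mul]
      ring

open Matrix

/-- Mirror version of the telescoping identity, with left-neighbour difference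
factors and the partial order reversed. -/
theorem stmt3 (k : ℕ) (hk : 1 ≤ k) (N : ℕ → ℕ)
    (hmono : ∀ i, 1 ≤ i → i < k → N i ≤ N (i + 1))
    (hzero : N 0 = 0)
    (p : Fin k → Fin 2) :
    lTerm k N p =
      ∑ p' ∈ Finset.univ.filter
          (fun p' : Fin k → Fin 2 => onesCount k p' = onesCount k p ∧ tle k p p'),
        lTerm k N p' * deltaL k N p' := by
  exact aux k N hmono hzero p
end

section
/- Fix k ≥ 1 and integers i, j ≥ 0 with i + j ≤ k. Let p'' ∈ {0,1}^k have exactly i+j ones and p' ∈ {0,1}^k have exactly j ones. Define the partial order p1 ≤ p2 iff ∑_{m=1}^n p_{1,m} ≥ ∑_{m=1}^n p_{2,m} for all n = 1,...,k. Let g_i^1(p'') be obtained by changing the last i ones of p'' to zeros, and g_i^0(p') by changing the last i zeros of p' to ones. Then p' ≥ g_i^1(p'') if and only if p'' ≤ g_i^0(p'). -/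
open Finset Polynomial

open Matrix

namespace Stmt5Aux
lemma fin2_cases (x : Fin 2) : x = 0 ∨ x = 1 := by revert x; decide

lemma fin2_val01 (x : Fin 2) : (x : ℕ) = 0 ∨ (x : ℕ) = 1 := by revert x; decide

lemma fin2_one_val : ((1 : Fin 2) : ℕ) = 1 := rfl
lemma fin2_zero_val : ((0 : Fin 2) : ℕ) = 0 := rfl

def Sf (k : ℕ) (p : Fin k → Fin 2) (t : ℕ) : ℕ :=
  ∑ n ∈ Finset.univ.filter (fun n : Fin k => (n : ℕ) < t), (p n : ℕ)

lemma Sf_zero (k : ℕ) (p : Fin k → Fin 2) : Sf k p 0 = 0 := by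
  unfold Sf
  rw [Finset.filter_false_of_mem (by intro n _; omega)]
  simp

lemma Sf_succ {k : ℕ} (p : Fin k → Fin 2) (t : ℕ) (ht : t < k) :
    Sf k p (t + 1) = Sf k p t + (p ⟨t, ht⟩ : ℕ) := by
  unfold Sf
  have h : Finset.univ.filter (fun n : Fin k => (n : ℕ) < t + 1)
      = insert ⟨t, ht⟩ (Finset.univ.filter (fun n : Fin k => (n : ℕ) < t)) := by
    ext n; simp [Fin.ext_iff]; omega
  rw [h, Finset.sum_insert (by simp)]
  omega

lemma Sf_k (k : ℕ) (p : Fin k → Fin 2) : Sf k p k = onesCount k p := by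
  unfold Sf onesCount
  rw [Finset.filter_true_of_mem (by intro n _; exact n.isLt)]

lemma L1 {k : ℕ} (p : Fin k → Fin 2) : ∀ t, t ≤ k →
    ∑ i ∈ Finset.Icc 1 t, ext' k p i = Sf k p t := by
  intro t
  induction t with
  | zero => intro _; simp [Sf_zero]
  | succ t ih =>
    intro ht
    have ht' : t < k := ht
    rw [Finset.sum_Icc_succ_top (by omega), ih (by omega), Sf_succ p t ht']
    congr 1
    unfold ext'
    rw [dif_pos ⟨by omega, by omega⟩]
    rfl

lemma Sf_step {k : ℕ} (p : Fin k → Fin 2) (t : ℕ) :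
    Sf k p t ≤ Sf k p (t + 1) ∧ Sf k p (t + 1) ≤ Sf k p t + 1 := by
  by_cases ht : t < k
  · rw [Sf_succ p t ht]
    have := fin2_val01 (p ⟨t, ht⟩); omega
  · have h : Finset.univ.filter (fun n : Fin k => (n : ℕ) < t + 1)
        = Finset.univ.filter (fun n : Fin k => (n : ℕ) < t) := by
      ext n; simp; have := n.isLt; omega
    unfold Sf; rw [h]; omega

lemma Sf_le {k : ℕ} (p : Fin k → Fin 2) {t t' : ℕ} (h : t ≤ t') :
    Sf k p t ≤ Sf k p t' ∧ Sf k p t' ≤ Sf k p t + (t' - t) := by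
  induction t' with
  | zero =>
    have ht0 : t = 0 := by omega
    subst ht0; omega
  | succ t' ih =>
    rcases Nat.lt_or_ge t (t' + 1) with h' | h'
    · have := ih (by omega)
      have := Sf_step p t'
      omega
    · have : t = t' + 1 := by omega
      subst this; omega

lemma Sf_le_self {k : ℕ} (p : Fin k → Fin 2) (t : ℕ) : Sf k p t ≤ t := by
  have := Sf_le p (Nat.zero_le t)
  have := Sf_zero k p
  omega

lemma sum_eq_card {k : ℕ} (A : Finset (Fin k)) (p : Fin k → Fin 2) :
    ∑ n ∈ A, (p n : ℕ) = (A.filter (fun n => p n = 1)).card := by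
  rw [Finset.card_filter]
  refine Finset.sum_congr rfl fun n _ => ?_
  rcases fin2_cases (p n) with h | h <;> simp [h]

lemma card_ones_split {k : ℕ} (p : Fin k → Fin 2) (m : Fin k) :
    Sf k p m.val + (Finset.univ.filter (fun n => m ≤ n ∧ p n = 1)).card
      = onesCount k p := by
  have hsplit := Finset.sum_filter_add_sum_filter_not Finset.univ
    (fun n : Fin k => (n : ℕ) < m.val) (fun n => (p n : ℕ))
  have h2 : Finset.univ.filter (fun n : Fin k => m ≤ n ∧ p n = 1)
      = (Finset.univ.filter (fun n : Fin k => ¬ (n : ℕ) < m.val)).filter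
          (fun n => p n = 1) := by
    rw [Finset.filter_filter]
    apply Finset.filter_congr
    intro n _
    simp only [Fin.le_def, not_lt]
  rw [h2, ← sum_eq_card]
  unfold Sf onesCount
  omega

lemma card_split_all {k : ℕ} (p : Fin k → Fin 2) (m : Fin k) :
    (Finset.univ.filter (fun n => m ≤ n ∧ p n = 1)).card
      + (Finset.univ.filter (fun n => m ≤ n ∧ p n = 0)).card = k - m.val := by
  rw [← Finset.card_union_of_disjoint]
  · have h : (Finset.univ.filter (fun n : Fin k => m ≤ n ∧ p n = 1))
        ∪ (Finset.univ.filter (fun n => m ≤ n ∧ p n = 0)) = Finset.Ici m := by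
      ext n
      simp only [Finset.mem_union, Finset.mem_filter, Finset.mem_univ, true_and,
        Finset.mem_Ici]
      rcases fin2_cases (p n) with h | h <;> simp [h]
    rw [h, Fin.card_Ici]
  · rw [Finset.disjoint_filter]
    rintro n _ ⟨_, h1⟩ ⟨_, h0⟩
    rw [h1] at h0; exact absurd h0 (by decide)


lemma g1_sum {k i j : ℕ} (p'' : Fin k → Fin 2) (h1 : onesCount k p'' = i + j) :
    ∀ t, t ≤ k → Sf k (g1 k i p'') t = min (Sf k p'' t) j := by
  intro t
  induction t with
  | zero => intro _; simp [Sf_zero]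
  | succ t ih =>
    intro ht
    have ht' : t < k := ht
    rw [Sf_succ _ t ht', Sf_succ _ t ht', ih (by omega)]
    have hc : Sf k p'' t
        + (Finset.univ.filter (fun n => (⟨t, ht'⟩ : Fin k) ≤ n ∧ p'' n = 1)).card
        = i + j := by
      have h := card_ones_split p'' ⟨t, ht'⟩
      rw [h1] at h; exact h
    show min (Sf k p'' t) j + (g1 k i p'' ⟨t, ht'⟩ : ℕ) = _
    unfold g1
    by_cases hflip : p'' ⟨t, ht'⟩ = 1
        ∧ (Finset.univ.filter (fun n => (⟨t, ht'⟩ : Fin k) ≤ n ∧ p'' n = 1)).card ≤ i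
    · rw [if_pos hflip]
      have hv : (p'' ⟨t, ht'⟩ : ℕ) = 1 := by rw [hflip.1]; rfl
      have h2 := hflip.2
      show min (Sf k p'' t) j + ((0 : Fin 2) : ℕ) = min (Sf k p'' t + _) j
      rw [fin2_zero_val]
      omega
    · rw [if_neg hflip]
      rcases fin2_cases (p'' ⟨t, ht'⟩) with h | h
      · have hv : (p'' ⟨t, ht'⟩ : ℕ) = 0 := by rw [h]; rfl
        omega
      · have hv : (p'' ⟨t, ht'⟩ : ℕ) = 1 := by rw [h]; rfl
        have hcard : ¬ (Finset.univ.filter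
            (fun n => (⟨t, ht'⟩ : Fin k) ≤ n ∧ p'' n = 1)).card ≤ i :=
          fun hh => hflip ⟨h, hh⟩
        omega

lemma g0_sum {k i j : ℕ} (hij : i + j ≤ k) (p' : Fin k → Fin 2)
    (h2 : onesCount k p' = j) :
    ∀ t, t ≤ k → Sf k (g0 k i p') t = t - min (t - Sf k p' t) (k - i - j) := by
  intro t
  induction t with
  | zero => intro _; simp [Sf_zero]
  | succ t ih =>
    intro ht
    have ht' : t < k := ht
    rw [Sf_succ _ t ht', Sf_succ _ t ht', ih (by omega)]
    have ha : Sf k p' t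
        + (Finset.univ.filter (fun n => (⟨t, ht'⟩ : Fin k) ≤ n ∧ p' n = 1)).card
        = j := by
      have h := card_ones_split p' ⟨t, ht'⟩
      rw [h2] at h; exact h
    have hb : (Finset.univ.filter (fun n => (⟨t, ht'⟩ : Fin k) ≤ n ∧ p' n = 1)).card
        + (Finset.univ.filter (fun n => (⟨t, ht'⟩ : Fin k) ≤ n ∧ p' n = 0)).card
        = k - t := card_split_all p' ⟨t, ht'⟩
    have hst : Sf k p' t ≤ t := Sf_le_self p' t
    show (t - min (t - Sf k p' t) (k - i - j)) + (g0 k i p' ⟨t, ht'⟩ : ℕ) = _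
    unfold g0
    by_cases hflip : p' ⟨t, ht'⟩ = 0
        ∧ (Finset.univ.filter (fun n => (⟨t, ht'⟩ : Fin k) ≤ n ∧ p' n = 0)).card ≤ i
    · rw [if_pos hflip]
      have hv : (p' ⟨t, ht'⟩ : ℕ) = 0 := by rw [hflip.1]; rfl
      have hz := hflip.2
      show _ + ((1 : Fin 2) : ℕ) = _
      rw [fin2_one_val]
      omega
    · rw [if_neg hflip]
      rcases fin2_cases (p' ⟨t, ht'⟩) with h | h
      · have hv : (p' ⟨t, ht'⟩ : ℕ) = 0 := by rw [h]; rfl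
        have hcard : ¬ (Finset.univ.filter
            (fun n => (⟨t, ht'⟩ : Fin k) ≤ n ∧ p' n = 0)).card ≤ i :=
          fun hh => hflip ⟨h, hh⟩
        omega
      · have hv : (p' ⟨t, ht'⟩ : ℕ) = 1 := by rw [h]; rfl
        omega

end Stmt5Aux

open Stmt5Aux

/-- `p' ≥ g_i^1(p'')` iff `p'' ≤ g_i^0(p')`, for `p''` with `i+j` ones and `p'` with `j` ones. -/
theorem stmt5 (k i j : ℕ) (hk : 1 ≤ k) (hij : i + j ≤ k)
    (p'' p' : Fin k → Fin 2)
    (h1 : onesCount k p'' = i + j) (h2 : onesCount k p' = j) :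
    tle k (g1 k i p'') p' ↔ tle k p'' (g0 k i p') := by
  have hA1 : ∀ n, n ≤ k → Sf k p' n ≤ j := by
    intro n hn
    have h := (Sf_le p' hn).1
    rw [Sf_k, h2] at h; exact h
  have hA2 : ∀ n, n ≤ k → i + j ≤ Sf k p'' n + (k - n) := by
    intro n hn
    have h := (Sf_le p'' hn).2
    rw [Sf_k, h1] at h; omega
  constructor
  · intro H n hn
    rw [Finset.mem_Icc] at hn
    have hH := H n (Finset.mem_Icc.mpr hn)
    rw [L1 p' n hn.2, L1 (g1 k i p'') n hn.2, g1_sum p'' h1 n hn.2] at hH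
    rw [L1 p'' n hn.2, L1 (g0 k i p') n hn.2, g0_sum hij p' h2 n hn.2]
    have h3 := hA2 n hn.2
    have h4 := Sf_le_self p' n
    omega
  · intro H n hn
    rw [Finset.mem_Icc] at hn
    have hH := H n (Finset.mem_Icc.mpr hn)
    rw [L1 p'' n hn.2, L1 (g0 k i p') n hn.2, g0_sum hij p' h2 n hn.2] at hH
    rw [L1 p' n hn.2, L1 (g1 k i p'') n hn.2, g1_sum p'' h1 n hn.2]
    have h3 := hA1 n hn.2
    have h4 := Sf_le_self p' n
    omega
end

section
/- Fix k ≥ 1, integers i, j with i + j ≤ k, nonincreasing integers N_{1,1} ≥ ... ≥ N_{1,k} ≥ 0 (convention N_{1,k+1} = 0) and nondecreasing integers 0 ≤ N_{2,1} ≤ ... ≤ N_{2,k} (convention N_{2,0} = 0). For a binary tuple p define l^1_p(q) = q^{∑ p_m N_{1,m}}, δ^1_p(q) = ∏_{m=1}^k (1 - [p_m=0, p_{m+1}=1] q^{N_{1,m}-N_{1,m+1}}) with p_{k+1}=0, l^2_p(q) = q^{∑ p_m N_{2,m}}, δ^2_p(q) = ∏_{m=1}^k (1 - [p_m=0, p_{m-1}=1]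 q^{N_{2,m}-N_{2,m-1}}) with p_0=0. Let g_i^1(p) change the last i ones of p into zeros and g_i^0(p) change the last i zeros of p into ones. Then ∑_{p with exactly i+j ones} l^1_p(q) δ^1_p(q) l^2_{g_i^1(p)}(q) = ∑_{p' with exactly j ones} l^1_{g_i^0(p')}(q) l^2_{p'}(q) δ^2_{p'}(q). -/
open Finset Polynomial

open Matrix

namespace Stmt6Aux

open Finset Polynomial

def sh (N : ℕ → ℕ) : ℕ → ℕ := fun m => N (m+1)

lemma sumIcc (k : ℕ) (f : ℕ → ℕ) : ∑ m ∈ Finset.Icc 1 k, f m = ∑ m ∈ Finset.range k, f (m+1) := by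
  induction k with
  | zero => simp
  | succ n ih => rw [Finset.sum_Icc_succ_top (by omega), ih, Finset.sum_range_succ]

lemma prodIcc (k : ℕ) (f : ℕ → Polynomial ℤ) :
    ∏ m ∈ Finset.Icc 1 k, f m = ∏ m ∈ Finset.range k, f (m+1) := by
  induction k with
  | zero => simp
  | succ n ih => rw [Finset.prod_Icc_succ_top (by omega), ih, Finset.prod_range_succ]

lemma ext'_zero (k : ℕ) (p : Fin k → Fin 2) : ext' k p 0 = 0 := by
  unfold ext'; rw [dif_neg (by omega)]

lemma ext'_gt (k : ℕ) (p : Fin k → Fin 2) {m : ℕ} (h : k < m) : ext' k p m = 0 := by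
  unfold ext'; rw [dif_neg (by omega)]

lemma ext'_cons_one (n : ℕ) (a : Fin 2) (t : Fin n → Fin 2) :
    ext' (n+1) (Fin.cons a t) 1 = (a : ℕ) := by
  unfold ext'
  rw [dif_pos ⟨le_refl 1, by omega⟩]
  congr 1

lemma ext'_cons_succ (n : ℕ) (a : Fin 2) (t : Fin n → Fin 2) (m : ℕ) (hm : 1 ≤ m) :
    ext' (n+1) (Fin.cons a t) (m+1) = ext' n t m := by
  unfold ext'
  by_cases h : m ≤ n
  · rw [dif_pos ⟨by omega, by omega⟩, dif_pos ⟨hm, h⟩]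
    have he : (⟨m+1-1, by omega⟩ : Fin (n+1)) = Fin.succ ⟨m-1, by omega⟩ := by
      ext; simp; omega
    rw [he, Fin.cons_succ]
  · rw [dif_neg (by omega), dif_neg (by omega)]

lemma onesCount_cons (n : ℕ) (a : Fin 2) (t : Fin n → Fin 2) :
    onesCount (n+1) (Fin.cons a t) = (a : ℕ) + onesCount n t := by
  unfold onesCount
  rw [Fin.sum_univ_succ]
  simp [Fin.cons_succ]

lemma sum_split (n : ℕ) (F : (Fin (n+1) → Fin 2) → Polynomial ℤ) :
    ∑ p : Fin (n+1) → Fin 2, F p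
      = (∑ t : Fin n → Fin 2, F (Fin.cons 0 t)) + ∑ t : Fin n → Fin 2, F (Fin.cons 1 t) := by
  rw [← Fintype.sum_equiv (Fin.consEquiv (fun _ : Fin (n+1) => Fin 2))
      (fun q => F (Fin.cons q.1 q.2)) F (fun q => rfl)]
  rw [Fintype.sum_prod_type, Fin.sum_univ_two]

lemma lTerm_eq (k : ℕ) (N : ℕ → ℕ) (p : Fin k → Fin 2) :
    lTerm k N p = Polynomial.X ^ (∑ m ∈ Finset.range k, ext' k p (m+1) * N (m+1)) := by
  unfold lTerm; rw [sumIcc]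

lemma deltaR_eq (k : ℕ) (N : ℕ → ℕ) (p : Fin k → Fin 2) :
    deltaR k N p = ∏ m ∈ Finset.range k,
      (1 - if ext' k p (m+1) = 0 ∧ ext' k p (m+2) = 1
           then Polynomial.X ^ (N (m+1) - N (m+2)) else 0) := by
  unfold deltaR; rw [prodIcc]

lemma deltaL_eq (k : ℕ) (N : ℕ → ℕ) (p : Fin k → Fin 2) :
    deltaL k N p = ∏ m ∈ Finset.range k,
      (1 - if ext' k p (m+1) = 0 ∧ ext' k p m = 1
           then Polynomial.X ^ (N (m+1) - N m) else 0) := by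
  unfold deltaL; rw [prodIcc]; simp

end Stmt6Aux
namespace Stmt6Aux
open Finset Polynomial

lemma lTerm_cons (n : ℕ) (N : ℕ → ℕ) (a : Fin 2) (t : Fin n → Fin 2) :
    lTerm (n+1) N (Fin.cons a t) = Polynomial.X ^ ((a : ℕ) * N 1) * lTerm n (sh N) t := by
  rw [lTerm_eq, lTerm_eq, ← pow_add]
  congr 1
  rw [Finset.sum_range_succ' (fun m => ext' (n+1) (Fin.cons a t) (m+1) * N (m+1)) n]
  rw [ext'_cons_one, add_comm]
  congr 1
  apply Finset.sum_congr rfl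
  intro m _
  rw [ext'_cons_succ n a t (m+1) (by omega)]
  rfl

lemma deltaR_cons (n : ℕ) (N : ℕ → ℕ) (a : Fin 2) (t : Fin n → Fin 2) :
    deltaR (n+1) N (Fin.cons a t)
      = (1 - if (a : ℕ) = 0 ∧ ext' n t 1 = 1 then Polynomial.X ^ (N 1 - N 2) else 0)
        * deltaR n (sh N) t := by
  rw [deltaR_eq, deltaR_eq]
  rw [Finset.prod_range_succ' (fun m => 1 - if ext' (n+1) (Fin.cons a t) (m+1) = 0 ∧
      ext' (n+1) (Fin.cons a t) (m+2) = 1 then Polynomial.X ^ (N (m+1) - N (m+2)) else 0) n]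
  rw [mul_comm]
  congr 1
  · rw [ext'_cons_one, ext'_cons_succ n a t 1 (by omega)]
  · apply Finset.prod_congr rfl
    intro m _
    rw [ext'_cons_succ n a t (m+1) (by omega), ext'_cons_succ n a t (m+2) (by omega)]
    rfl

lemma deltaL_cons0 (n : ℕ) (N : ℕ → ℕ) (t : Fin n → Fin 2) :
    deltaL (n+1) N (Fin.cons 0 t) = deltaL n (sh N) t := by
  rw [deltaL_eq, deltaL_eq]
  rw [Finset.prod_range_succ' (fun m => 1 - if ext' (n+1) (Fin.cons 0 t) (m+1) = 0 ∧
      ext' (n+1) (Fin.cons 0 t) m = 1 then Polynomial.X ^ (N (m+1) - N m) else 0) n]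
  have h0 : ((1 : Polynomial ℤ) - if ext' (n+1) (Fin.cons 0 t) (0+1) = 0 ∧ ext' (n+1) (Fin.cons 0 t) 0 = 1
      then Polynomial.X ^ (N (0+1) - N 0) else 0) = 1 := by
    rw [ext'_zero]; simp
  rw [h0, mul_one]
  apply Finset.prod_congr rfl
  intro m _
  rw [ext'_cons_succ n 0 t (m+1) (by omega)]
  rcases Nat.eq_zero_or_pos m with hm | hm
  · subst hm
    rw [ext'_cons_one, ext'_zero]
    norm_num
  · rw [ext'_cons_succ n 0 t m hm]
    rfl

lemma deltaL_cons1 (n : ℕ) (N : ℕ → ℕ) (t : Fin n → Fin 2) (hn : 1 ≤ n) :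
    deltaL (n+1) N (Fin.cons 1 t)
      = (1 - if ext' n t 1 = 0 then Polynomial.X ^ (N 2 - N 1) else 0)
        * deltaL n (sh N) t := by
  rw [deltaL_eq, deltaL_eq]
  rw [Finset.prod_range_succ' (fun m => 1 - if ext' (n+1) (Fin.cons 1 t) (m+1) = 0 ∧
      ext' (n+1) (Fin.cons 1 t) m = 1 then Polynomial.X ^ (N (m+1) - N m) else 0) n]
  have h0 : ((1 : Polynomial ℤ) - if ext' (n+1) (Fin.cons 1 t) (0+1) = 0 ∧ ext' (n+1) (Fin.cons 1 t) 0 = 1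
      then Polynomial.X ^ (N (0+1) - N 0) else 0) = 1 := by
    rw [ext'_cons_one]; norm_num
  rw [h0, mul_one]
  obtain ⟨n', rfl⟩ : ∃ n', n = n' + 1 := ⟨n - 1, by omega⟩
  rw [Finset.prod_range_succ' (fun m => 1 - if ext' (n'+1+1) (Fin.cons 1 t) (m+1+1) = 0 ∧
      ext' (n'+1+1) (Fin.cons 1 t) (m+1) = 1 then Polynomial.X ^ (N (m+1+1) - N (m+1)) else 0) n']
  rw [Finset.prod_range_succ' (fun m => 1 - if ext' (n'+1) t (m+1) = 0 ∧
      ext' (n'+1) t m = 1 then Polynomial.X ^ (sh N (m+1) - sh N m) else 0) n']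
  have h1 : ((1 : Polynomial ℤ) - if ext' (n'+1) t (0+1) = 0 ∧ ext' (n'+1) t 0 = 1
      then Polynomial.X ^ (sh N (0+1) - sh N 0) else 0) = 1 := by
    rw [ext'_zero]; simp
  rw [h1, mul_one]
  have h2 : ((1 : Polynomial ℤ) - if ext' (n'+1+1) (Fin.cons 1 t) (0+1+1) = 0 ∧
      ext' (n'+1+1) (Fin.cons 1 t) (0+1) = 1 then Polynomial.X ^ (N (0+1+1) - N (0+1)) else 0)
      = (1 - if ext' (n'+1) t 1 = 0 then Polynomial.X ^ (N 2 - N 1) else 0) := by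
    rw [ext'_cons_succ (n'+1) 1 t 1 (by omega), ext'_cons_one]
    norm_num
  rw [h2, mul_comm]
  congr 1
  apply Finset.prod_congr rfl
  intro m _
  rw [ext'_cons_succ (n'+1) 1 t (m+2) (by omega), ext'_cons_succ (n'+1) 1 t (m+1) (by omega)]
  rfl

end Stmt6Aux
namespace Stmt6Aux
open Finset Polynomial

lemma fin2_cases (x : Fin 2) : x = 0 ∨ x = 1 := by
  rcases x with ⟨v, hv⟩
  interval_cases v
  · exact Or.inl rfl
  · exact Or.inr rfl

lemma fin2_val (x : Fin 2) : (x : ℕ) = if x = 1 then 1 else 0 := by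
  rcases fin2_cases x with h | h <;> subst h <;> simp

lemma card_ones (k : ℕ) (p : Fin k → Fin 2) :
    (Finset.univ.filter (fun x : Fin k => p x = 1)).card = onesCount k p := by
  unfold onesCount
  rw [Finset.card_filter]
  apply Finset.sum_congr rfl
  intro x _
  rw [fin2_val]

lemma onesCount_le (k : ℕ) (p : Fin k → Fin 2) : onesCount k p ≤ k := by
  unfold onesCount
  calc ∑ x : Fin k, (p x : ℕ) ≤ ∑ _x : Fin k, 1 :=
        Finset.sum_le_sum (fun x _ => by have := (p x).isLt; omega)
    _ = k := by simp

lemma card_zeros (k : ℕ) (p : Fin k → Fin 2) :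
    (Finset.univ.filter (fun x : Fin k => p x = 0)).card = k - onesCount k p := by
  have h := Finset.card_filter_add_card_filter_not
    (s := (Finset.univ : Finset (Fin k))) (p := fun x => p x = 1)
  have h2 : (Finset.univ.filter (fun x : Fin k => ¬ p x = 1))
      = Finset.univ.filter (fun x : Fin k => p x = 0) := by
    apply Finset.filter_congr
    intro x _
    rcases fin2_cases (p x) with hx | hx <;> simp [hx]
  rw [h2, card_ones] at h
  rw [Finset.card_univ, Fintype.card_fin] at h
  omega

lemma card_filter_succ (n : ℕ) (a : Fin 2) (t : Fin n → Fin 2) (m : Fin n) (c : Fin 2) :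
    (Finset.univ.filter (fun x : Fin (n+1) => m.succ ≤ x ∧ (Fin.cons a t : Fin (n+1) → Fin 2) x = c)).card
      = (Finset.univ.filter (fun x : Fin n => m ≤ x ∧ t x = c)).card := by
  have he : (Finset.univ.filter (fun x : Fin (n+1) => m.succ ≤ x ∧ (Fin.cons a t : Fin (n+1) → Fin 2) x = c))
      = (Finset.univ.filter (fun y : Fin n => m ≤ y ∧ t y = c)).map
          ⟨Fin.succ, Fin.succ_injective n⟩ := by
    ext x
    simp only [Finset.mem_filter, Finset.mem_map, Finset.mem_univ, true_and,
      Function.Embedding.coeFn_mk]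
    constructor
    · rintro ⟨h1, h2⟩
      have hx0 : x ≠ 0 := by
        intro h
        subst h
        exact Fin.succ_ne_zero m (Fin.le_zero_iff.mp h1)
      obtain ⟨y, rfl⟩ := Fin.eq_succ_of_ne_zero hx0
      rw [Fin.cons_succ] at h2
      exact ⟨y, ⟨Fin.succ_le_succ_iff.mp h1, h2⟩, rfl⟩
    · rintro ⟨y, ⟨h1, h2⟩, rfl⟩
      rw [Fin.cons_succ]
      exact ⟨Fin.succ_le_succ_iff.mpr h1, h2⟩
  rw [he, Finset.card_map]

lemma card_zero_le (n : ℕ) (q : Fin n → Fin 2) (c : Fin 2) [NeZero n] :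
    (Finset.univ.filter (fun x : Fin n => (0 : Fin n) ≤ x ∧ q x = c))
      = Finset.univ.filter (fun x : Fin n => q x = c) := by
  apply Finset.filter_congr
  intro x _
  simp [Fin.zero_le]

lemma g1_cons1 (n i : ℕ) (t : Fin n → Fin 2) (h : i ≤ onesCount n t) :
    g1 (n+1) i (Fin.cons 1 t) = Fin.cons 1 (g1 n i t) := by
  funext m
  induction m using Fin.cases with
  | zero =>
    unfold g1
    simp only [Fin.cons_zero]
    rw [if_neg]
    rintro ⟨-, hc⟩
    rw [card_zero_le, card_ones, onesCount_cons] at hc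
    simp at hc
    omega
  | succ m =>
    unfold g1
    simp only [Fin.cons_succ]
    rw [card_filter_succ]

lemma g1_cons0 (n i : ℕ) (t : Fin n → Fin 2) :
    g1 (n+1) i (Fin.cons 0 t) = Fin.cons 0 (g1 n i t) := by
  funext m
  induction m using Fin.cases with
  | zero =>
    unfold g1
    simp only [Fin.cons_zero]
    rw [if_neg]
    rintro ⟨hc, -⟩
    exact absurd hc (by decide)
  | succ m =>
    unfold g1
    simp only [Fin.cons_succ]
    rw [card_filter_succ]

lemma g0_cons1 (n i : ℕ) (t : Fin n → Fin 2) :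
    g0 (n+1) i (Fin.cons 1 t) = Fin.cons 1 (g0 n i t) := by
  funext m
  induction m using Fin.cases with
  | zero =>
    unfold g0
    simp only [Fin.cons_zero]
    rw [if_neg]
    rintro ⟨hc, -⟩
    exact absurd hc (by decide)
  | succ m =>
    unfold g0
    simp only [Fin.cons_succ]
    rw [card_filter_succ]

lemma g0_cons0 (n i : ℕ) (t : Fin n → Fin 2) (h : i + onesCount n t ≤ n) :
    g0 (n+1) i (Fin.cons 0 t) = Fin.cons 0 (g0 n i t) := by
  funext m
  induction m using Fin.cases with
  | zero =>
    unfold g0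
    simp only [Fin.cons_zero]
    rw [if_neg]
    rintro ⟨-, hc⟩
    rw [card_zero_le, card_zeros, onesCount_cons] at hc
    simp at hc
    have := onesCount_le n t
    omega
  | succ m =>
    unfold g0
    simp only [Fin.cons_succ]
    rw [card_filter_succ]

lemma g1_all (k i : ℕ) (p : Fin k → Fin 2) (h : onesCount k p ≤ i) :
    g1 k i p = fun _ => 0 := by
  funext m
  unfold g1
  rcases fin2_cases (p m) with hm | hm
  · rw [if_neg (by rintro ⟨hc, -⟩; rw [hm] at hc; exact absurd hc (by decide)), hm]
  · rw [if_pos]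
    refine ⟨hm, ?_⟩
    calc (Finset.univ.filter (fun x : Fin k => m ≤ x ∧ p x = 1)).card
        ≤ (Finset.univ.filter (fun x : Fin k => p x = 1)).card := by
          apply Finset.card_le_card
          apply Finset.monotone_filter_right
          intro x _ hx
          exact hx.2
      _ = onesCount k p := card_ones k p
      _ ≤ i := h

lemma g0_all (k i : ℕ) (p : Fin k → Fin 2) (h : k ≤ i + onesCount k p) :
    g0 k i p = fun _ => 1 := by
  funext m
  unfold g0
  rcases fin2_cases (p m) with hm | hm
  · rw [if_pos]
    refine ⟨hm, ?_⟩
    calc (Finset.univ.filter (fun x : Fin k => m ≤ x ∧ p x = 0)).card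
        ≤ (Finset.univ.filter (fun x : Fin k => p x = 0)).card := by
          apply Finset.card_le_card
          apply Finset.monotone_filter_right
          intro x _ hx
          exact hx.2
      _ = k - onesCount k p := card_zeros k p
      _ ≤ i := by omega
  · rw [if_neg (by rintro ⟨hc, -⟩; rw [hm] at hc; exact absurd hc (by decide)), hm]

lemma onesCount_eq_zero (k : ℕ) (p : Fin k → Fin 2) (h : onesCount k p = 0) :
    p = fun _ => 0 := by
  funext m
  unfold onesCount at h
  rw [Finset.sum_eq_zero_iff] at h
  have := h m (Finset.mem_univ m)
  rcases fin2_cases (p m) with hm | hm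
  · exact hm
  · rw [hm] at this; exact absurd this (by decide)

lemma onesCount_eq_top (k : ℕ) (p : Fin k → Fin 2) (h : onesCount k p = k) :
    p = fun _ => 1 := by
  funext m
  by_contra hm
  have hm0 : p m = 0 := by rcases fin2_cases (p m) with h' | h' <;> simp [h'] at hm ⊢
  have : onesCount k p < k := by
    unfold onesCount
    calc ∑ x : Fin k, (p x : ℕ)
        < ∑ _x : Fin k, 1 := by
          apply Finset.sum_lt_sum
          · intro x _
            have := (p x).isLt
            omega
          · exact ⟨m, Finset.mem_univ m, by rw [hm0]; norm_num⟩
      _ = k := by simp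
  omega

end Stmt6Aux
namespace Stmt6Aux
open Finset Polynomial

lemma ext'_const0 (k : ℕ) (m : ℕ) : ext' k (fun _ => (0 : Fin 2)) m = 0 := by
  unfold ext'
  split <;> simp

lemma ext'_const1 (k : ℕ) (m : ℕ) (h1 : 1 ≤ m) (h2 : m ≤ k) :
    ext' k (fun _ => (1 : Fin 2)) m = 1 := by
  unfold ext'
  rw [dif_pos ⟨h1, h2⟩]
  rfl

lemma lTerm_zero_tuple (k : ℕ) (N : ℕ → ℕ) : lTerm k N (fun _ => 0) = 1 := by
  rw [lTerm_eq]
  have : ∀ m ∈ Finset.range k, ext' k (fun _ => (0:Fin 2)) (m+1) * N (m+1) = 0 := by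
    intro m _
    rw [ext'_const0]
    ring
  rw [Finset.sum_congr rfl this]
  simp

lemma lTerm_one_tuple (k : ℕ) (N : ℕ → ℕ) :
    lTerm k N (fun _ => 1) = Polynomial.X ^ (∑ m ∈ Finset.range k, N (m+1)) := by
  rw [lTerm_eq]
  congr 1
  apply Finset.sum_congr rfl
  intro m hm
  rw [ext'_const1 k (m+1) (by omega) (by simp at hm; omega)]
  ring

lemma deltaR_zero_tuple (k : ℕ) (N : ℕ → ℕ) : deltaR k N (fun _ => 0) = 1 := by
  rw [deltaR_eq]
  apply Finset.prod_eq_one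
  intro m _
  rw [if_neg]
  · ring
  · rintro ⟨-, hc⟩
    rw [ext'_const0] at hc
    omega

lemma deltaR_one_tuple (k : ℕ) (N : ℕ → ℕ) : deltaR k N (fun _ => 1) = 1 := by
  rw [deltaR_eq]
  apply Finset.prod_eq_one
  intro m hm
  rw [if_neg]
  · ring
  · rintro ⟨hc, -⟩
    rw [ext'_const1 k (m+1) (by omega) (by simp at hm; omega)] at hc
    omega

lemma deltaL_zero_tuple (k : ℕ) (N : ℕ → ℕ) : deltaL k N (fun _ => 0) = 1 := by
  rw [deltaL_eq]
  apply Finset.prod_eq_one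
  intro m _
  rw [if_neg]
  · ring
  · rintro ⟨-, hc⟩
    rw [ext'_const0] at hc
    omega

lemma deltaL_one_tuple (k : ℕ) (N : ℕ → ℕ) : deltaL k N (fun _ => 1) = 1 := by
  rw [deltaL_eq]
  apply Finset.prod_eq_one
  intro m hm
  rw [if_neg]
  · ring
  · rintro ⟨hc, -⟩
    rw [ext'_const1 k (m+1) (by omega) (by simp at hm; omega)] at hc
    omega

lemma card_filter_ge (k : ℕ) (x : Fin k) :
    (Finset.univ.filter (fun y : Fin k => x ≤ y)).card = k - (x : ℕ) := by
  have : (Finset.univ.filter (fun y : Fin k => x ≤ y)) = Finset.Ici x := by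
    ext y
    simp
  rw [this, Fin.card_Ici]

lemma ext'_g0_zero (k i : ℕ) (m : ℕ) (h1 : 1 ≤ m) (h2 : m ≤ k) :
    ext' k (g0 k i (fun _ => 0)) m = if k - i ≤ m - 1 then 1 else 0 := by
  unfold ext'
  rw [dif_pos ⟨h1, h2⟩]
  unfold g0
  have hc : (Finset.univ.filter (fun y : Fin k => (⟨m-1, by omega⟩ : Fin k) ≤ y ∧
      (0:Fin 2) = 0)).card = k - (m-1) := by
    rw [← card_filter_ge k ⟨m-1, by omega⟩]
    congr 1
    apply Finset.filter_congr
    intro y _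
    simp
  rw [hc]
  by_cases hd : k - (m-1) ≤ i
  · rw [if_pos ⟨rfl, hd⟩, if_pos (by omega)]
    rfl
  · rw [if_neg (by rintro ⟨-, hcc⟩; omega), if_neg (by omega)]
    rfl

lemma ext'_g1_one (k i : ℕ) (m : ℕ) (h1 : 1 ≤ m) (h2 : m ≤ k) :
    ext' k (g1 k i (fun _ => 1)) m = if m - 1 < k - i then 1 else 0 := by
  unfold ext'
  rw [dif_pos ⟨h1, h2⟩]
  unfold g1
  have hc : (Finset.univ.filter (fun y : Fin k => (⟨m-1, by omega⟩ : Fin k) ≤ y ∧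
      (1:Fin 2) = 1)).card = k - (m-1) := by
    rw [← card_filter_ge k ⟨m-1, by omega⟩]
    congr 1
    apply Finset.filter_congr
    intro y _
    simp
  rw [hc]
  by_cases hd : k - (m-1) ≤ i
  · rw [if_pos ⟨rfl, hd⟩, if_neg (by omega)]
    rfl
  · rw [if_neg (by rintro ⟨-, hcc⟩; omega), if_pos (by omega)]
    rfl

lemma lTerm_g0_zero (k i : ℕ) (N : ℕ → ℕ) (h : i ≤ k) :
    lTerm k N (g0 k i (fun _ => 0))
      = Polynomial.X ^ (∑ m ∈ Finset.range i, N (k - i + 1 + m)) := by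
  rw [lTerm_eq]
  congr 1
  have step1 : ∀ m ∈ Finset.range k,
      ext' k (g0 k i (fun _ => 0)) (m+1) * N (m+1) = if k - i ≤ m then N (m+1) else 0 := by
    intro m hm
    rw [ext'_g0_zero k i (m+1) (by omega) (by simp at hm; omega)]
    simp only [Nat.add_sub_cancel]
    split <;> simp
  rw [Finset.sum_congr rfl step1]
  have hs := Finset.sum_range_add (fun m => if k - i ≤ m then N (m+1) else 0) (k-i) i
  rw [show (k-i)+i = k from by omega] at hs
  rw [hs]
  have h1 : ∑ m ∈ Finset.range (k-i), (if k - i ≤ m then N (m+1) else 0) = 0 := by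
    apply Finset.sum_eq_zero
    intro m hm
    simp at hm
    rw [if_neg (by omega)]
  rw [h1, zero_add]
  apply Finset.sum_congr rfl
  intro m _
  rw [if_pos (by omega)]
  congr 1
  omega

lemma lTerm_g1_one (k i : ℕ) (N : ℕ → ℕ) (h : i ≤ k) :
    lTerm k N (g1 k i (fun _ => 1))
      = Polynomial.X ^ (∑ m ∈ Finset.range (k - i), N (m + 1)) := by
  rw [lTerm_eq]
  congr 1
  have step1 : ∀ m ∈ Finset.range k,
      ext' k (g1 k i (fun _ => 1)) (m+1) * N (m+1) = if m < k - i then N (m+1) else 0 := by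
    intro m hm
    rw [ext'_g1_one k i (m+1) (by omega) (by simp at hm; omega)]
    simp only [Nat.add_sub_cancel]
    split <;> simp
  rw [Finset.sum_congr rfl step1]
  have hs := Finset.sum_range_add (fun m => if m < k - i then N (m+1) else 0) (k-i) i
  rw [show (k-i)+i = k from by omega] at hs
  rw [hs]
  have h2 : ∑ m ∈ Finset.range i, (if k - i + m < k - i then N (k - i + m + 1) else 0) = 0 := by
    apply Finset.sum_eq_zero
    intro m _
    rw [if_neg (by omega)]
  rw [h2, add_zero]
  apply Finset.sum_congr rfl
  intro m hm
  simp at hm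
  rw [if_pos (by omega)]

/-- Left sum of the identity, as a total sum with indicator. -/
noncomputable def SL (k i j : ℕ) (N1 N2 : ℕ → ℕ) : Polynomial ℤ :=
  ∑ p : Fin k → Fin 2, if onesCount k p = i + j
    then lTerm k N1 p * deltaR k N1 p * lTerm k N2 (g1 k i p) else 0

/-- Right sum of the identity, as a total sum with indicator. -/
noncomputable def SR (k i j : ℕ) (N1 N2 : ℕ → ℕ) : Polynomial ℤ :=
  ∑ p : Fin k → Fin 2, if onesCount k p = j
    then lTerm k N1 (g0 k i p) * lTerm k N2 p * deltaL k N2 p else 0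

/-- Telescoped deltaR sum. -/
noncomputable def TR (k w : ℕ) (N : ℕ → ℕ) : Polynomial ℤ :=
  ∑ p : Fin k → Fin 2, if onesCount k p = w
    then lTerm k N p * deltaR k N p else 0

/-- Telescoped deltaL sum. -/
noncomputable def TL (k w : ℕ) (N : ℕ → ℕ) : Polynomial ℤ :=
  ∑ p : Fin k → Fin 2, if onesCount k p = w
    then lTerm k N p * deltaL k N p else 0

lemma TR_zero (k w : ℕ) (N : ℕ → ℕ) (h : k < w) : TR k w N = 0 := by
  apply Finset.sum_eq_zero
  intro p _
  rw [if_neg]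
  have := onesCount_le k p
  omega

lemma TL_zero (k w : ℕ) (N : ℕ → ℕ) (h : k < w) : TL k w N = 0 := by
  apply Finset.sum_eq_zero
  intro p _
  rw [if_neg]
  have := onesCount_le k p
  omega

lemma SL_zero (k i j : ℕ) (N1 N2 : ℕ → ℕ) (h : k < i + j) : SL k i j N1 N2 = 0 := by
  apply Finset.sum_eq_zero
  intro p _
  rw [if_neg]
  have := onesCount_le k p
  omega

lemma SR_zero (k i j : ℕ) (N1 N2 : ℕ → ℕ) (h : k < j) : SR k i j N1 N2 = 0 := by
  apply Finset.sum_eq_zero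
  intro p _
  rw [if_neg]
  have := onesCount_le k p
  omega

end Stmt6Aux
namespace Stmt6Aux
open Finset Polynomial

lemma oc_cons0 (n : ℕ) (t : Fin n → Fin 2) :
    onesCount (n+1) (Fin.cons 0 t) = onesCount n t := by
  rw [onesCount_cons]; simp

lemma oc_cons1 (n : ℕ) (t : Fin n → Fin 2) :
    onesCount (n+1) (Fin.cons 1 t) = onesCount n t + 1 := by
  rw [onesCount_cons]; simp [add_comm]

lemma onesCount_const0 (k : ℕ) : onesCount k (fun _ => 0) = 0 := by
  unfold onesCount; simp

lemma onesCount_const1 (k : ℕ) : onesCount k (fun _ => 1) = k := by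
  unfold onesCount; simp

lemma shMonoR {N : ℕ → ℕ} {k : ℕ} (h : ∀ m, 1 ≤ m → m ≤ k + 1 → N (m+1) ≤ N m) :
    ∀ m, 1 ≤ m → m ≤ k → sh N (m+1) ≤ sh N m := by
  intro m h1 h2
  exact h (m+1) (by omega) (by omega)

lemma shMonoL {N : ℕ → ℕ} {k : ℕ} (h : ∀ m, 1 ≤ m → m < k + 1 → N m ≤ N (m+1)) :
    ∀ m, 1 ≤ m → m < k → sh N m ≤ sh N (m+1) := by
  intro m h1 h2
  exact h (m+1) (by omega) (by omega)

lemma TR_cons1 (n w : ℕ) (N : ℕ → ℕ) :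
    (∑ t : Fin n → Fin 2, if onesCount n t = w
        then lTerm (n+1) N (Fin.cons 1 t) * deltaR (n+1) N (Fin.cons 1 t) else 0)
      = Polynomial.X ^ (N 1) * TR n w (sh N) := by
  rw [TR, Finset.mul_sum]
  apply Finset.sum_congr rfl
  intro t _
  by_cases hc : onesCount n t = w
  · rw [if_pos hc, if_pos hc, lTerm_cons, deltaR_cons]
    rw [if_neg (by rintro ⟨hx, -⟩; simp at hx)]
    have hv : ((1 : Fin 2) : ℕ) = 1 := rfl
    rw [hv, one_mul, sub_zero, one_mul]
    ring
  · rw [if_neg hc, if_neg hc, mul_zero]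

lemma lTerm_fin0 (N : ℕ → ℕ) (t : Fin 0 → Fin 2) : lTerm 0 N t = 1 := by
  rw [lTerm_eq]; simp

lemma deltaR_fin0 (N : ℕ → ℕ) (t : Fin 0 → Fin 2) : deltaR 0 N t = 1 := by
  rw [deltaR_eq]; simp

lemma deltaL_fin0 (N : ℕ → ℕ) (t : Fin 0 → Fin 2) : deltaL 0 N t = 1 := by
  rw [deltaL_eq]; simp

lemma ext'_fin0 (t : Fin 0 → Fin 2) (m : ℕ) : ext' 0 t m = 0 := by
  unfold ext'; rw [dif_neg (by omega)]

lemma sum_fin0 (F : (Fin 0 → Fin 2) → Polynomial ℤ) :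
    ∑ t : Fin 0 → Fin 2, F t = F (fun x => x.elim0) := by
  apply Fintype.sum_eq_single
  intro x hx
  exact absurd (_root_.funext fun m => Fin.elim0 m) hx

lemma TR_inner (n w : ℕ) (N : ℕ → ℕ) (hw : 1 ≤ w) :
    (∑ t : Fin n → Fin 2, if onesCount n t = w
        then (if ext' n t 1 = 1 then lTerm n N t * deltaR n N t else 0) else 0)
      = if n = 0 then 0 else Polynomial.X ^ (N 1) * TR (n-1) (w-1) (sh N) := by
  rcases n with _ | n'
  · rw [if_pos rfl]
    apply Finset.sum_eq_zero
    intro t _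
    have h0 : onesCount 0 t = 0 := by unfold onesCount; simp
    rw [if_neg (by omega)]
  · rw [if_neg (by omega)]
    rw [sum_split n' (fun t => if onesCount (n'+1) t = w
        then (if ext' (n'+1) t 1 = 1 then lTerm (n'+1) N t * deltaR (n'+1) N t else 0) else 0)]
    have hzero : (∑ v : Fin n' → Fin 2, if onesCount (n'+1) (Fin.cons 0 v) = w
        then (if ext' (n'+1) (Fin.cons 0 v) 1 = 1
              then lTerm (n'+1) N (Fin.cons 0 v) * deltaR (n'+1) N (Fin.cons 0 v) else 0)
        else 0) = 0 := by
      apply Finset.sum_eq_zero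
      intro v _
      rw [ext'_cons_one]
      rw [if_neg (show ¬ ((0 : Fin 2) : ℕ) = 1 from by decide)]
      rw [ite_self]
    rw [hzero, zero_add]
    show _ = Polynomial.X ^ (N 1) * TR n' (w-1) (sh N)
    rw [← TR_cons1 n' (w-1) N]
    apply Finset.sum_congr rfl
    intro v _
    rw [ext'_cons_one]
    rw [if_pos (show ((1 : Fin 2) : ℕ) = 1 from rfl)]
    exact if_congr (by rw [oc_cons1]; omega) rfl rfl

lemma teleR : ∀ k w (N : ℕ → ℕ), w ≤ k → (∀ m, 1 ≤ m → m ≤ k → N (m+1) ≤ N m) →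
    TR k w N = Polynomial.X ^ (∑ m ∈ Finset.range w, N (k - w + 1 + m)) := by
  intro k
  induction k using Nat.strong_induction_on with
  | _ k IH =>
  intro w N hw hmono
  rcases Nat.eq_zero_or_pos w with rfl | hw1
  · -- w = 0 for any k
    rw [TR, Fintype.sum_eq_single (fun _ => (0 : Fin 2))]
    · rw [if_pos (onesCount_const0 k), lTerm_zero_tuple, deltaR_zero_tuple]
      simp
    · intro x hx
      rw [if_neg (fun hc => hx (onesCount_eq_zero _ _ hc))]
  rcases k with _ | n
  · omega
  -- 1 ≤ w ≤ n+1
  rw [TR, sum_split n (fun p => if onesCount (n+1) p = w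
      then lTerm (n+1) N p * deltaR (n+1) N p else 0)]
  have hc1 : (∑ t : Fin n → Fin 2, if onesCount (n+1) (Fin.cons 1 t) = w
      then lTerm (n+1) N (Fin.cons 1 t) * deltaR (n+1) N (Fin.cons 1 t) else 0)
      = Polynomial.X ^ (N 1) * TR n (w-1) (sh N) := by
    rw [← TR_cons1 n (w-1) N]
    apply Finset.sum_congr rfl
    intro t _
    exact if_congr (by rw [oc_cons1]; omega) rfl rfl
  have hc0 : (∑ t : Fin n → Fin 2, if onesCount (n+1) (Fin.cons 0 t) = w
      then lTerm (n+1) N (Fin.cons 0 t) * deltaR (n+1) N (Fin.cons 0 t) else 0)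
      = TR n w (sh N) - Polynomial.X ^ (N 1 - N 2) *
          (∑ t : Fin n → Fin 2, if onesCount n t = w
            then (if ext' n t 1 = 1 then lTerm n (sh N) t * deltaR n (sh N) t else 0) else 0) := by
    rw [TR, Finset.mul_sum, ← Finset.sum_sub_distrib]
    apply Finset.sum_congr rfl
    intro t _
    rw [if_congr (by rw [oc_cons0]) rfl rfl]
    by_cases hc : onesCount n t = w
    · rw [if_pos hc, if_pos hc, if_pos hc, lTerm_cons, deltaR_cons]
      have hv : ((0 : Fin 2) : ℕ) * N 1 = 0 := by simp
      by_cases he : ext' n t 1 = 1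
      · rw [if_pos (show ((0 : Fin 2) : ℕ) = 0 ∧ ext' n t 1 = 1 from ⟨rfl, he⟩), if_pos he]
        rw [hv, pow_zero, one_mul]
        ring
      · rw [if_neg (fun hcon => he hcon.2), if_neg he]
        rw [hv, pow_zero, one_mul]
        ring
    · rw [if_neg hc, if_neg hc, if_neg hc, mul_zero, sub_zero]
  rw [hc0, hc1, TR_inner n w (sh N) hw1]
  rcases (by omega : w ≤ n ∨ w = n + 1) with hcase | hcase
  · have hn0 : n ≠ 0 := by omega
    rw [if_neg hn0]
    have hN21 : N 2 ≤ N 1 := hmono 1 (by omega) (by omega)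
    rw [IH n (by omega) w (sh N) hcase (shMonoR hmono)]
    rw [IH n (by omega) (w-1) (sh N) (by omega) (shMonoR hmono)]
    rw [IH (n-1) (by omega) (w-1) (sh (sh N)) (by omega)
        (by have h2 := shMonoR hmono
            intro m hm1 hm2
            exact (shMonoR (k := n - 1) (by intro m' hm1' hm2'; exact h2 m' hm1' (by omega))) m hm1 hm2)]
    have hCA : (∑ m ∈ Finset.range (w-1), sh (sh N) (n - 1 - (w-1) + 1 + m))
        = ∑ m ∈ Finset.range (w-1), sh N (n - (w-1) + 1 + m) := by
      apply Finset.sum_congr rfl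
      intro m hm
      unfold sh
      congr 1
      omega
    rw [hCA]
    have h3 : (Polynomial.X : Polynomial ℤ) ^ (N 1 - N 2) *
        ((Polynomial.X : Polynomial ℤ) ^ (sh N 1) *
          (Polynomial.X : Polynomial ℤ) ^ (∑ m ∈ Finset.range (w-1), sh N (n - (w-1) + 1 + m)))
        = (Polynomial.X : Polynomial ℤ) ^ (N 1) *
          (Polynomial.X : Polynomial ℤ) ^ (∑ m ∈ Finset.range (w-1), sh N (n - (w-1) + 1 + m)) := by
      rw [← pow_add, ← pow_add, ← pow_add]
      congr 1
      have hs : sh N 1 = N 2 := rfl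
      rw [hs]
      omega
    rw [h3, sub_add_cancel]
    congr 1
    apply Finset.sum_congr rfl
    intro m hm
    unfold sh
    congr 1
    omega
  · -- w = n + 1
    subst hcase
    have h3 : (if n = 0 then (0 : Polynomial ℤ)
        else Polynomial.X ^ (sh N 1) * TR (n-1) (n+1-1) (sh (sh N))) = 0 := by
      by_cases hn : n = 0
      · rw [if_pos hn]
      · rw [if_neg hn, TR_zero (n-1) (n+1-1) _ (by omega), mul_zero]
    rw [h3, mul_zero, sub_zero, TR_zero n (n+1) _ (by omega), zero_add]
    rw [show n + 1 - 1 = n from rfl]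
    rw [IH n (by omega) n (sh N) (le_refl n) (shMonoR hmono)]
    rw [← pow_add]
    congr 1
    have hg : (∑ m ∈ Finset.range (n+1), N (n + 1 - (n + 1) + 1 + m))
        = ∑ m ∈ Finset.range n, N (m+2) + N 1 := by
      rw [← Finset.sum_range_succ' (fun m => N (m+1)) n]
      apply Finset.sum_congr rfl
      intro m hm
      congr 1
      omega
    rw [hg]
    have hA : (∑ m ∈ Finset.range n, sh N (n - n + 1 + m)) = ∑ m ∈ Finset.range n, N (m+2) := by
      apply Finset.sum_congr rfl
      intro m hm
      unfold sh
      congr 1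
      omega
    rw [hA]
    omega

end Stmt6Aux
namespace Stmt6Aux
open Finset Polynomial

lemma deltaL_one_any (N : ℕ → ℕ) (p : Fin 1 → Fin 2) : deltaL 1 N p = 1 := by
  rw [deltaL_eq, Finset.prod_range_one, ext'_zero]
  simp

lemma TL_inner (n w : ℕ) (N : ℕ → ℕ) :
    (∑ t : Fin n → Fin 2, if onesCount n t = w
        then (if ext' n t 1 = 0 then lTerm n N t * deltaL n N t else 0) else 0)
      = TL (n-1) w (sh N) := by
  rcases n with _ | n'
  · rw [sum_fin0 (fun t => if onesCount 0 t = w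
        then (if ext' 0 t 1 = 0 then lTerm 0 N t * deltaL 0 N t else 0) else 0)]
    rw [TL, sum_fin0 (fun t => if onesCount 0 t = w
        then lTerm 0 (sh N) t * deltaL 0 (sh N) t else 0)]
    rw [if_pos (ext'_fin0 _ 1), lTerm_fin0, deltaL_fin0, lTerm_fin0, deltaL_fin0]
  · rw [sum_split n' (fun t => if onesCount (n'+1) t = w
        then (if ext' (n'+1) t 1 = 0 then lTerm (n'+1) N t * deltaL (n'+1) N t else 0) else 0)]
    have hone : (∑ v : Fin n' → Fin 2, if onesCount (n'+1) (Fin.cons 1 v) = w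
        then (if ext' (n'+1) (Fin.cons 1 v) 1 = 0
              then lTerm (n'+1) N (Fin.cons 1 v) * deltaL (n'+1) N (Fin.cons 1 v) else 0)
        else 0) = 0 := by
      apply Finset.sum_eq_zero
      intro v _
      rw [ext'_cons_one]
      rw [if_neg (show ¬ ((1 : Fin 2) : ℕ) = 0 from by decide)]
      rw [ite_self]
    rw [hone, add_zero]
    show _ = TL n' w (sh N)
    rw [TL]
    apply Finset.sum_congr rfl
    intro v _
    rw [ext'_cons_one]
    rw [if_pos (show ((0 : Fin 2) : ℕ) = 0 from rfl)]
    rw [lTerm_cons, deltaL_cons0]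
    have hv : ((0 : Fin 2) : ℕ) * N 1 = 0 := by simp
    rw [hv, pow_zero, one_mul]
    exact if_congr (by rw [oc_cons0]) rfl rfl

lemma teleL : ∀ k w (N : ℕ → ℕ), w ≤ k → (∀ m, 1 ≤ m → m < k → N m ≤ N (m+1)) →
    TL k w N = Polynomial.X ^ (∑ m ∈ Finset.range w, N (m + 1)) := by
  intro k
  induction k using Nat.strong_induction_on with
  | _ k IH =>
  intro w N hw hmono
  rcases Nat.eq_zero_or_pos w with rfl | hw1
  · rw [TL, Fintype.sum_eq_single (fun _ => (0 : Fin 2))]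
    · rw [if_pos (onesCount_const0 k), lTerm_zero_tuple, deltaL_zero_tuple]
      simp
    · intro x hx
      rw [if_neg (fun hc => hx (onesCount_eq_zero _ _ hc))]
  rcases k with _ | n
  · omega
  rw [TL, sum_split n (fun p => if onesCount (n+1) p = w
      then lTerm (n+1) N p * deltaL (n+1) N p else 0)]
  rcases Nat.eq_zero_or_pos n with rfl | hn1
  · -- k = 1, w = 1
    interval_cases w
    rw [sum_fin0 (fun t => if onesCount 1 (Fin.cons 0 t) = 1
        then lTerm 1 N (Fin.cons 0 t) * deltaL 1 N (Fin.cons 0 t) else 0)]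
    rw [sum_fin0 (fun t => if onesCount 1 (Fin.cons 1 t) = 1
        then lTerm 1 N (Fin.cons 1 t) * deltaL 1 N (Fin.cons 1 t) else 0)]
    rw [if_neg (by rw [oc_cons0]; unfold onesCount; simp)]
    rw [if_pos (by rw [oc_cons1]; unfold onesCount; simp)]
    rw [lTerm_cons, deltaL_one_any, lTerm_fin0]
    have hv : ((1 : Fin 2) : ℕ) * N 1 = N 1 := by simp
    rw [hv]
    rw [Finset.sum_range_one]
    ring
  -- n ≥ 1
  have hc0 : (∑ t : Fin n → Fin 2, if onesCount (n+1) (Fin.cons 0 t) = w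
      then lTerm (n+1) N (Fin.cons 0 t) * deltaL (n+1) N (Fin.cons 0 t) else 0)
      = TL n w (sh N) := by
    rw [TL]
    apply Finset.sum_congr rfl
    intro t _
    rw [if_congr (by rw [oc_cons0]) rfl rfl]
    by_cases hc : onesCount n t = w
    · rw [if_pos hc, if_pos hc, lTerm_cons, deltaL_cons0]
      have hv : ((0 : Fin 2) : ℕ) * N 1 = 0 := by simp
      rw [hv, pow_zero, one_mul]
    · rw [if_neg hc, if_neg hc]
  have hc1 : (∑ t : Fin n → Fin 2, if onesCount (n+1) (Fin.cons 1 t) = w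
      then lTerm (n+1) N (Fin.cons 1 t) * deltaL (n+1) N (Fin.cons 1 t) else 0)
      = Polynomial.X ^ (N 1) * TL n (w-1) (sh N)
        - Polynomial.X ^ (N 1) * Polynomial.X ^ (N 2 - N 1) *
          (∑ t : Fin n → Fin 2, if onesCount n t = w - 1
            then (if ext' n t 1 = 0 then lTerm n (sh N) t * deltaL n (sh N) t else 0) else 0) := by
    rw [TL, Finset.mul_sum, Finset.mul_sum, ← Finset.sum_sub_distrib]
    apply Finset.sum_congr rfl
    intro t _
    rw [if_congr (show onesCount (n+1) (Fin.cons 1 t) = w ↔ onesCount n t = w - 1 from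
        by rw [oc_cons1]; omega) rfl rfl]
    by_cases hc : onesCount n t = w - 1
    · rw [if_pos hc, if_pos hc, if_pos hc, lTerm_cons, deltaL_cons1 n N t hn1]
      have hv : ((1 : Fin 2) : ℕ) * N 1 = N 1 := by simp
      rw [hv]
      by_cases he : ext' n t 1 = 0
      · rw [if_pos he, if_pos he]
        ring
      · rw [if_neg he, if_neg he]
        ring
    · rw [if_neg hc, if_neg hc, if_neg hc]
      ring
  rw [hc0, hc1, TL_inner n (w-1) (sh N)]
  have hN12 : N 1 ≤ N 2 := hmono 1 (by omega) (by omega)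
  have hA1 : ∀ w', (∑ m ∈ Finset.range w', sh N (m+1)) = ∑ m ∈ Finset.range w', N (m+2) := by
    intro w'
    apply Finset.sum_congr rfl
    intro m _
    unfold sh
    try congr 1
    try omega
  have hA2 : ∀ w', (∑ m ∈ Finset.range w', sh (sh N) (m+1)) = ∑ m ∈ Finset.range w', N (m+3) := by
    intro w'
    apply Finset.sum_congr rfl
    intro m _
    unfold sh
    try congr 1
    try omega
  have peel1 : (∑ m ∈ Finset.range w, N (m+1)) = N 1 + ∑ m ∈ Finset.range (w-1), N (m+2) := by
    have h := Finset.sum_range_succ' (fun m => N (m+1)) (w-1)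
    rw [show w - 1 + 1 = w from by omega] at h
    rw [h, add_comm]
    try congr 1
  have peel2 : (∑ m ∈ Finset.range w, N (m+2)) = N 2 + ∑ m ∈ Finset.range (w-1), N (m+3) := by
    have h := Finset.sum_range_succ' (fun m => N (m+2)) (w-1)
    rw [show w - 1 + 1 = w from by omega] at h
    rw [h, add_comm]
    try congr 1
  rcases (by omega : w ≤ n ∨ w = n + 1) with hcase | hcase
  · rw [IH n (by omega) w (sh N) hcase (shMonoL hmono)]
    rw [IH n (by omega) (w-1) (sh N) (by omega) (shMonoL hmono)]
    rw [IH (n-1) (by omega) (w-1) (sh (sh N)) (by omega)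
        (by intro m hm1 hm2
            exact hmono (m+2) (by omega) (by omega))]
    rw [hA1 w, hA1 (w-1), hA2 (w-1), peel1, peel2]
    rw [← pow_add, ← pow_add, ← pow_add]
    have he : N 1 + (N 2 - N 1) + (∑ m ∈ Finset.range (w-1), N (m+3))
        = N 2 + ∑ m ∈ Finset.range (w-1), N (m+3) := by omega
    rw [he]
    ring
  · subst hcase
    rw [TL_zero n (n+1) _ (by omega)]
    rw [show n + 1 - 1 = n from rfl]
    rw [TL_zero (n-1) n _ (by omega), mul_zero, sub_zero, zero_add]
    rw [IH n (by omega) n (sh N) (le_refl n) (shMonoL hmono)]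
    rw [hA1 n, peel1]
    rw [show n + 1 - 1 = n from rfl, ← pow_add]

end Stmt6Aux
namespace Stmt6Aux
open Finset Polynomial

lemma SL_cons1 (n i w : ℕ) (N1 N2 : ℕ → ℕ) :
    (∑ t : Fin n → Fin 2, if onesCount n t = i + w
        then lTerm (n+1) N1 (Fin.cons 1 t) * deltaR (n+1) N1 (Fin.cons 1 t)
          * lTerm (n+1) N2 (g1 (n+1) i (Fin.cons 1 t)) else 0)
      = Polynomial.X ^ (N1 1 + N2 1) * SL n i w (sh N1) (sh N2) := by
  rw [SL, Finset.mul_sum]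
  apply Finset.sum_congr rfl
  intro t _
  by_cases hc : onesCount n t = i + w
  · rw [if_pos hc, if_pos hc]
    rw [g1_cons1 n i t (by omega)]
    rw [lTerm_cons, deltaR_cons, lTerm_cons]
    rw [if_neg (fun hx => absurd hx.1 (show ¬ ((1:Fin 2):ℕ) = 0 from by decide))]
    have hv1 : ((1 : Fin 2) : ℕ) * N1 1 = N1 1 := by simp
    have hv2 : ((1 : Fin 2) : ℕ) * N2 1 = N2 1 := by simp
    rw [hv1, hv2]
    rw [pow_add]
    ring
  · rw [if_neg hc, if_neg hc, mul_zero]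

lemma SL_cons0 (n i w : ℕ) (N1 N2 : ℕ → ℕ) :
    (∑ t : Fin n → Fin 2, if onesCount n t = i + w
        then lTerm (n+1) N1 (Fin.cons 0 t) * deltaR (n+1) N1 (Fin.cons 0 t)
          * lTerm (n+1) N2 (g1 (n+1) i (Fin.cons 0 t)) else 0)
      = SL n i w (sh N1) (sh N2) - Polynomial.X ^ (N1 1 - N1 2) *
          (∑ t : Fin n → Fin 2, if onesCount n t = i + w
            then (if ext' n t 1 = 1
              then lTerm n (sh N1) t * deltaR n (sh N1) t * lTerm n (sh N2) (g1 n i t) else 0)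
            else 0) := by
  rw [SL, Finset.mul_sum, ← Finset.sum_sub_distrib]
  apply Finset.sum_congr rfl
  intro t _
  by_cases hc : onesCount n t = i + w
  · rw [if_pos hc, if_pos hc, if_pos hc]
    rw [g1_cons0 n i t]
    rw [lTerm_cons, deltaR_cons, lTerm_cons]
    have hv1 : ((0 : Fin 2) : ℕ) * N1 1 = 0 := by simp
    have hv2 : ((0 : Fin 2) : ℕ) * N2 1 = 0 := by simp
    rw [hv1, hv2]
    by_cases he : ext' n t 1 = 1
    · rw [if_pos (show ((0:Fin 2):ℕ) = 0 ∧ ext' n t 1 = 1 from ⟨rfl, he⟩), if_pos he]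
      ring
    · rw [if_neg (fun hx => he hx.2), if_neg he]
      ring
  · rw [if_neg hc, if_neg hc, if_neg hc]
    ring

lemma SL_inner (n i w : ℕ) (N1 N2 : ℕ → ℕ) :
    (∑ t : Fin n → Fin 2, if onesCount n t = i + w + 1
        then (if ext' n t 1 = 1
          then lTerm n N1 t * deltaR n N1 t * lTerm n N2 (g1 n i t) else 0) else 0)
      = if n = 0 then 0
        else Polynomial.X ^ (N1 1 + N2 1) * SL (n-1) i w (sh N1) (sh N2) := by
  rcases n with _ | n'
  · rw [if_pos rfl]
    apply Finset.sum_eq_zero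
    intro t _
    have h0 : onesCount 0 t = 0 := by unfold onesCount; simp
    rw [if_neg (by omega)]
  · rw [if_neg (by omega)]
    rw [sum_split n' (fun t => if onesCount (n'+1) t = i + w + 1
        then (if ext' (n'+1) t 1 = 1
          then lTerm (n'+1) N1 t * deltaR (n'+1) N1 t * lTerm (n'+1) N2 (g1 (n'+1) i t) else 0)
        else 0)]
    have hzero : (∑ v : Fin n' → Fin 2, if onesCount (n'+1) (Fin.cons 0 v) = i + w + 1
        then (if ext' (n'+1) (Fin.cons 0 v) 1 = 1
          then lTerm (n'+1) N1 (Fin.cons 0 v) * deltaR (n'+1) N1 (Fin.cons 0 v)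
            * lTerm (n'+1) N2 (g1 (n'+1) i (Fin.cons 0 v)) else 0) else 0) = 0 := by
      apply Finset.sum_eq_zero
      intro v _
      rw [ext'_cons_one]
      rw [if_neg (show ¬ ((0 : Fin 2) : ℕ) = 1 from by decide)]
      rw [ite_self]
    rw [hzero, zero_add]
    show _ = Polynomial.X ^ (N1 1 + N2 1) * SL n' i w (sh N1) (sh N2)
    rw [← SL_cons1 n' i w N1 N2]
    apply Finset.sum_congr rfl
    intro v _
    rw [ext'_cons_one]
    rw [if_pos (show ((1 : Fin 2) : ℕ) = 1 from rfl)]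
    exact if_congr (by rw [oc_cons1]; omega) rfl rfl

lemma SR_cons0 (n i w : ℕ) (N1 N2 : ℕ → ℕ) (h : i + w ≤ n) :
    (∑ t : Fin n → Fin 2, if onesCount n t = w
        then lTerm (n+1) N1 (g0 (n+1) i (Fin.cons 0 t)) * lTerm (n+1) N2 (Fin.cons 0 t)
          * deltaL (n+1) N2 (Fin.cons 0 t) else 0)
      = SR n i w (sh N1) (sh N2) := by
  rw [SR]
  apply Finset.sum_congr rfl
  intro t _
  by_cases hc : onesCount n t = w
  · rw [if_pos hc, if_pos hc]
    rw [g0_cons0 n i t (by omega)]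
    rw [lTerm_cons, lTerm_cons, deltaL_cons0]
    have hv1 : ((0 : Fin 2) : ℕ) * N1 1 = 0 := by simp
    have hv2 : ((0 : Fin 2) : ℕ) * N2 1 = 0 := by simp
    rw [hv1, hv2, pow_zero, one_mul, one_mul]
  · rw [if_neg hc, if_neg hc]

lemma SR_cons1 (n i w : ℕ) (N1 N2 : ℕ → ℕ) (hn : 1 ≤ n) :
    (∑ t : Fin n → Fin 2, if onesCount n t = w
        then lTerm (n+1) N1 (g0 (n+1) i (Fin.cons 1 t)) * lTerm (n+1) N2 (Fin.cons 1 t)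
          * deltaL (n+1) N2 (Fin.cons 1 t) else 0)
      = Polynomial.X ^ (N1 1 + N2 1) * SR n i w (sh N1) (sh N2)
        - Polynomial.X ^ (N1 1 + N2 1) * Polynomial.X ^ (N2 2 - N2 1) *
          (∑ t : Fin n → Fin 2, if onesCount n t = w
            then (if ext' n t 1 = 0
              then lTerm n (sh N1) (g0 n i t) * lTerm n (sh N2) t * deltaL n (sh N2) t else 0)
            else 0) := by
  rw [SR, Finset.mul_sum, Finset.mul_sum, ← Finset.sum_sub_distrib]
  apply Finset.sum_congr rfl
  intro t _
  by_cases hc : onesCount n t = w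
  · rw [if_pos hc, if_pos hc, if_pos hc]
    rw [g0_cons1 n i t]
    rw [lTerm_cons, lTerm_cons, deltaL_cons1 n N2 t hn]
    have hv1 : ((1 : Fin 2) : ℕ) * N1 1 = N1 1 := by simp
    have hv2 : ((1 : Fin 2) : ℕ) * N2 1 = N2 1 := by simp
    rw [hv1, hv2, pow_add]
    by_cases he : ext' n t 1 = 0
    · rw [if_pos he, if_pos he]
      ring
    · rw [if_neg he, if_neg he]
      ring
  · rw [if_neg hc, if_neg hc, if_neg hc]
    ring

lemma SR_inner (n i w : ℕ) (N1 N2 : ℕ → ℕ) (hn : 1 ≤ n) (h : i + w + 1 ≤ n) :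
    (∑ t : Fin n → Fin 2, if onesCount n t = w
        then (if ext' n t 1 = 0
          then lTerm n N1 (g0 n i t) * lTerm n N2 t * deltaL n N2 t else 0) else 0)
      = SR (n-1) i w (sh N1) (sh N2) := by
  rcases n with _ | n'
  · omega
  rw [sum_split n' (fun t => if onesCount (n'+1) t = w
      then (if ext' (n'+1) t 1 = 0
        then lTerm (n'+1) N1 (g0 (n'+1) i t) * lTerm (n'+1) N2 t * deltaL (n'+1) N2 t else 0)
      else 0)]
  have hone : (∑ v : Fin n' → Fin 2, if onesCount (n'+1) (Fin.cons 1 v) = w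
      then (if ext' (n'+1) (Fin.cons 1 v) 1 = 0
        then lTerm (n'+1) N1 (g0 (n'+1) i (Fin.cons 1 v)) * lTerm (n'+1) N2 (Fin.cons 1 v)
          * deltaL (n'+1) N2 (Fin.cons 1 v) else 0) else 0) = 0 := by
    apply Finset.sum_eq_zero
    intro v _
    rw [ext'_cons_one]
    rw [if_neg (show ¬ ((1 : Fin 2) : ℕ) = 0 from by decide)]
    rw [ite_self]
  rw [hone, add_zero]
  show _ = SR n' i w (sh N1) (sh N2)
  rw [SR]
  apply Finset.sum_congr rfl
  intro v _
  rw [ext'_cons_one]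
  rw [if_pos (show ((0 : Fin 2) : ℕ) = 0 from rfl)]
  rw [if_congr (show onesCount (n'+1) (Fin.cons 0 v) = w ↔ onesCount n' v = w from
      by rw [oc_cons0]) rfl rfl]
  by_cases hc : onesCount n' v = w
  · rw [if_pos hc, if_pos hc]
    rw [g0_cons0 n' i v (by omega)]
    rw [lTerm_cons, lTerm_cons, deltaL_cons0]
    have hv1 : ((0 : Fin 2) : ℕ) * N1 1 = 0 := by simp
    have hv2 : ((0 : Fin 2) : ℕ) * N2 1 = 0 := by simp
    rw [hv1, hv2, pow_zero, one_mul, one_mul]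
  · rw [if_neg hc, if_neg hc]

lemma main : ∀ k i j (N1 N2 : ℕ → ℕ), i + j ≤ k →
    (∀ m, 1 ≤ m → m ≤ k → N1 (m+1) ≤ N1 m) →
    (∀ m, 1 ≤ m → m < k → N2 m ≤ N2 (m+1)) →
    SL k i j N1 N2 = SR k i j N1 N2 := by
  intro k
  induction k using Nat.strong_induction_on with
  | _ k IH =>
  intro i j N1 N2 hij h1 h2
  rcases Nat.eq_zero_or_pos j with rfl | hj
  · -- j = 0
    have hSL : SL k i 0 N1 N2 = TR k i N1 := by
      rw [SL, TR]
      apply Finset.sum_congr rfl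
      intro p _
      by_cases hc : onesCount k p = i + 0
      · rw [if_pos hc, if_pos (show onesCount k p = i from by omega)]
        rw [g1_all k i p (by omega), lTerm_zero_tuple, mul_one]
      · rw [if_neg hc, if_neg (by omega)]
    rw [hSL, teleR k i N1 (by omega) h1]
    rw [SR, Fintype.sum_eq_single (fun _ => (0 : Fin 2))]
    · rw [if_pos (onesCount_const0 k)]
      rw [lTerm_g0_zero k i N1 (by omega), lTerm_zero_tuple, deltaL_zero_tuple, mul_one, mul_one]
    · intro x hx
      rw [if_neg (fun hc => hx (onesCount_eq_zero _ _ hc))]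
  by_cases hk : k = i + j
  · -- k = i + j
    have hSL : SL k i j N1 N2
        = Polynomial.X ^ (∑ m ∈ Finset.range k, N1 (m+1)) *
          Polynomial.X ^ (∑ m ∈ Finset.range j, N2 (m+1)) := by
      rw [SL, Fintype.sum_eq_single (fun _ => (1 : Fin 2))]
      · rw [if_pos (by rw [onesCount_const1]; omega)]
        rw [lTerm_one_tuple, deltaR_one_tuple, mul_one, lTerm_g1_one k i N2 (by omega)]
        rw [show k - i = j from by omega]
      · intro x hx
        rw [if_neg (fun hc => hx (onesCount_eq_top _ _ (by omega)))]
    have hSR : SR k i j N1 N2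
        = Polynomial.X ^ (∑ m ∈ Finset.range k, N1 (m+1)) * TL k j N2 := by
      rw [SR, TL, Finset.mul_sum]
      apply Finset.sum_congr rfl
      intro p _
      by_cases hc : onesCount k p = j
      · rw [if_pos hc, if_pos hc, g0_all k i p (by omega), lTerm_one_tuple]
        ring
      · rw [if_neg hc, if_neg hc, mul_zero]
    rw [hSL, hSR, teleL k j N2 (by omega) h2]
  -- generic: j ≥ 1, i + j < k
  obtain ⟨n, rfl⟩ : ∃ n, k = n + 1 := ⟨k - 1, by omega⟩
  have hn1 : 1 ≤ n := by omega
  have hN12 : N1 2 ≤ N1 1 := h1 1 (by omega) (by omega)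
  have hN21 : N2 1 ≤ N2 2 := h2 1 (by omega) (by omega)
  have hm1 : ∀ m, 1 ≤ m → m ≤ n → sh N1 (m+1) ≤ sh N1 m := shMonoR h1
  have hm2 : ∀ m, 1 ≤ m → m < n → sh N2 m ≤ sh N2 (m+1) := shMonoL h2
  have hm1' : ∀ m, 1 ≤ m → m ≤ n - 1 → sh (sh N1) (m+1) ≤ sh (sh N1) m := by
    intro m hma hmb
    exact h1 (m+2) (by omega) (by omega)
  have hm2' : ∀ m, 1 ≤ m → m < n - 1 → sh (sh N2) m ≤ sh (sh N2) (m+1) := by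
    intro m hma hmb
    exact h2 (m+2) (by omega) (by omega)
  -- SL side
  have hLsplit : SL (n+1) i j N1 N2
      = Polynomial.X ^ (N1 1 + N2 1) * SL n i (j-1) (sh N1) (sh N2)
        + (SL n i j (sh N1) (sh N2)
          - Polynomial.X ^ (N1 1 - N1 2) *
            (Polynomial.X ^ (N1 2 + N2 2) * SL (n-1) i (j-1) (sh (sh N1)) (sh (sh N2)))) := by
    rw [SL, sum_split n (fun p => if onesCount (n+1) p = i + j
        then lTerm (n+1) N1 p * deltaR (n+1) N1 p * lTerm (n+1) N2 (g1 (n+1) i p) else 0)]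
    have hL1 : (∑ t : Fin n → Fin 2, if onesCount (n+1) (Fin.cons 1 t) = i + j
        then lTerm (n+1) N1 (Fin.cons 1 t) * deltaR (n+1) N1 (Fin.cons 1 t)
          * lTerm (n+1) N2 (g1 (n+1) i (Fin.cons 1 t)) else 0)
        = Polynomial.X ^ (N1 1 + N2 1) * SL n i (j-1) (sh N1) (sh N2) := by
      rw [← SL_cons1 n i (j-1) N1 N2]
      apply Finset.sum_congr rfl
      intro t _
      exact if_congr (by rw [oc_cons1]; omega) rfl rfl
    have hL0 : (∑ t : Fin n → Fin 2, if onesCount (n+1) (Fin.cons 0 t) = i + j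
        then lTerm (n+1) N1 (Fin.cons 0 t) * deltaR (n+1) N1 (Fin.cons 0 t)
          * lTerm (n+1) N2 (g1 (n+1) i (Fin.cons 0 t)) else 0)
        = SL n i j (sh N1) (sh N2) - Polynomial.X ^ (N1 1 - N1 2) *
            (∑ t : Fin n → Fin 2, if onesCount n t = i + j
              then (if ext' n t 1 = 1
                then lTerm n (sh N1) t * deltaR n (sh N1) t * lTerm n (sh N2) (g1 n i t) else 0)
              else 0) := by
      rw [← SL_cons0 n i j N1 N2]
      apply Finset.sum_congr rfl
      intro t _
      exact if_congr (by rw [oc_cons0]) rfl rfl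
    rw [hL1, hL0]
    have hIn : (∑ t : Fin n → Fin 2, if onesCount n t = i + j
        then (if ext' n t 1 = 1
          then lTerm n (sh N1) t * deltaR n (sh N1) t * lTerm n (sh N2) (g1 n i t) else 0)
        else 0)
        = Polynomial.X ^ (N1 2 + N2 2) * SL (n-1) i (j-1) (sh (sh N1)) (sh (sh N2)) := by
      have h' := SL_inner n i (j-1) (sh N1) (sh N2)
      rw [if_neg (by omega)] at h'
      have hsh : sh N1 1 + sh N2 1 = N1 2 + N2 2 := rfl
      rw [hsh] at h'
      rw [← h']
      apply Finset.sum_congr rfl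
      intro t _
      exact if_congr (by omega) rfl rfl
    rw [hIn]
    ring
  -- SR side
  have hRsplit : SR (n+1) i j N1 N2
      = SR n i j (sh N1) (sh N2)
        + (Polynomial.X ^ (N1 1 + N2 1) * SR n i (j-1) (sh N1) (sh N2)
          - Polynomial.X ^ (N1 1 + N2 1) * Polynomial.X ^ (N2 2 - N2 1) *
              SR (n-1) i (j-1) (sh (sh N1)) (sh (sh N2))) := by
    rw [SR, sum_split n (fun p => if onesCount (n+1) p = j
        then lTerm (n+1) N1 (g0 (n+1) i p) * lTerm (n+1) N2 p * deltaL (n+1) N2 p else 0)]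
    have hR0 : (∑ t : Fin n → Fin 2, if onesCount (n+1) (Fin.cons 0 t) = j
        then lTerm (n+1) N1 (g0 (n+1) i (Fin.cons 0 t)) * lTerm (n+1) N2 (Fin.cons 0 t)
          * deltaL (n+1) N2 (Fin.cons 0 t) else 0)
        = SR n i j (sh N1) (sh N2) := by
      rw [← SR_cons0 n i j N1 N2 (by omega)]
      apply Finset.sum_congr rfl
      intro t _
      exact if_congr (by rw [oc_cons0]) rfl rfl
    have hR1 : (∑ t : Fin n → Fin 2, if onesCount (n+1) (Fin.cons 1 t) = j
        then lTerm (n+1) N1 (g0 (n+1) i (Fin.cons 1 t)) * lTerm (n+1) N2 (Fin.cons 1 t)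
          * deltaL (n+1) N2 (Fin.cons 1 t) else 0)
        = Polynomial.X ^ (N1 1 + N2 1) * SR n i (j-1) (sh N1) (sh N2)
          - Polynomial.X ^ (N1 1 + N2 1) * Polynomial.X ^ (N2 2 - N2 1) *
            (∑ t : Fin n → Fin 2, if onesCount n t = j - 1
              then (if ext' n t 1 = 0
                then lTerm n (sh N1) (g0 n i t) * lTerm n (sh N2) t * deltaL n (sh N2) t else 0)
              else 0) := by
      rw [← SR_cons1 n i (j-1) N1 N2 hn1]
      apply Finset.sum_congr rfl
      intro t _
      exact if_congr (by rw [oc_cons1]; omega) rfl rfl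
    rw [hR0, hR1]
    rw [SR_inner n i (j-1) (sh N1) (sh N2) hn1 (by omega)]
  rw [hLsplit, hRsplit]
  rw [IH n (by omega) i (j-1) (sh N1) (sh N2) (by omega) hm1 hm2]
  rw [IH n (by omega) i j (sh N1) (sh N2) (by omega) hm1 hm2]
  rw [IH (n-1) (by omega) i (j-1) (sh (sh N1)) (sh (sh N2)) (by omega) hm1' hm2']
  have hE : Polynomial.X ^ (N1 1 - N1 2) *
      ((Polynomial.X : Polynomial ℤ) ^ (N1 2 + N2 2) *
        SR (n-1) i (j-1) (sh (sh N1)) (sh (sh N2)))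
      = Polynomial.X ^ (N1 1 + N2 1) * Polynomial.X ^ (N2 2 - N2 1) *
        SR (n-1) i (j-1) (sh (sh N1)) (sh (sh N2)) := by
    rw [← mul_assoc, ← pow_add, ← pow_add]
    congr 2
    omega
  rw [hE]
  ring

end Stmt6Aux

/-- Proposition 3.10: the interchange identity between the two parameterizations
of the linear term. -/
theorem stmt6 (k i j : ℕ) (hk : 1 ≤ k) (hij : i + j ≤ k)
    (N1 N2 : ℕ → ℕ)
    (hN1 : ∀ m, 1 ≤ m → m ≤ k → N1 (m + 1) ≤ N1 m)
    (hN1z : ∀ m, k < m → N1 m = 0)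
    (hN2 : ∀ m, 1 ≤ m → m < k → N2 m ≤ N2 (m + 1))
    (hN20 : N2 0 = 0) :
    ∑ p ∈ Finset.univ.filter (fun p : Fin k → Fin 2 => onesCount k p = i + j),
        lTerm k N1 p * deltaR k N1 p * lTerm k N2 (g1 k i p) =
    ∑ p' ∈ Finset.univ.filter (fun p' : Fin k → Fin 2 => onesCount k p' = j),
        lTerm k N1 (g0 k i p') * lTerm k N2 p' * deltaL k N2 p' := by
  rw [Finset.sum_filter, Finset.sum_filter]
  exact Stmt6Aux.main k i j N1 N2 hij hN1 hN2
end

section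
/- Let p'' and p' be binary k-tuples with p'' having exactly k_0 ones and p' having exactly k_0 + k_2 ones (k_0 + k_2 ≤ k). Let f_{k_2}^1(p') be obtained from p' by changing its first k_2 ones (at smallest positions) into zeros, and f_{k_2}^0(p'') by changing the first k_2 zeros of p'' into ones. Under the partial order p1 ≤ p2 iff all initial partial sums of p1 are ≥ those of p2: p'' ≤ f_{k_2}^1(p') if and only if p' ≥ f_{k_2}^0(p''). -/
open Finset Polynomial

open Matrix

/-- Partial sum of the first `j` coordinates (0-based cutoff). -/
def Sfun (k : ℕ) (p : Fin k → Fin 2) (j : ℕ) : ℕ :=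
  ∑ n ∈ Finset.univ.filter (fun n : Fin k => (n : ℕ) < j), (p n : ℕ)

lemma Sfun_zero (k : ℕ) (p : Fin k → Fin 2) : Sfun k p 0 = 0 := by
  simp [Sfun]

lemma Sfun_succ_lt (k : ℕ) (p : Fin k → Fin 2) {j : ℕ} (hj : j < k) :
    Sfun k p (j + 1) = Sfun k p j + (p ⟨j, hj⟩ : ℕ) := by
  have hset : Finset.univ.filter (fun n : Fin k => (n : ℕ) < j + 1)
      = insert ⟨j, hj⟩ (Finset.univ.filter (fun n : Fin k => (n : ℕ) < j)) := by
    ext n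
    simp only [Finset.mem_filter, Finset.mem_univ, true_and, Finset.mem_insert,
      Fin.ext_iff]
    omega
  rw [Sfun, hset, Finset.sum_insert (by simp)]
  simp [Sfun]
  ring

lemma Sfun_succ_ge (k : ℕ) (p : Fin k → Fin 2) {j : ℕ} (hj : k ≤ j) :
    Sfun k p (j + 1) = Sfun k p j := by
  unfold Sfun
  congr 1
  ext n
  simp only [Finset.mem_filter, Finset.mem_univ, true_and]
  have := n.isLt
  omega

lemma Sfun_le (k : ℕ) (p : Fin k → Fin 2) (j : ℕ) : Sfun k p j ≤ min j k := by
  induction j with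
  | zero => simp [Sfun_zero]
  | succ j ih =>
    by_cases hj : j < k
    · rw [Sfun_succ_lt k p hj]
      have := (p ⟨j, hj⟩).isLt
      omega
    · rw [Sfun_succ_ge k p (by omega)]
      omega

lemma fin2_cast (x : Fin 2) : (x : ℕ) = if x = 1 then 1 else 0 := by
  fin_cases x <;> simp

lemma rank_one (k : ℕ) (p : Fin k → Fin 2) (m : Fin k) :
    (Finset.univ.filter (fun n => n ≤ m ∧ p n = 1)).card = Sfun k p (m + 1) := by
  rw [Sfun, Finset.sum_filter, Finset.card_filter]
  apply Finset.sum_congr rfl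
  intro n _
  rw [fin2_cast (p n)]
  have hle : n ≤ m ↔ (n : ℕ) < (m : ℕ) + 1 := by
    rw [Fin.le_def]; omega
  simp only [hle, ite_and]

lemma rank_zero (k : ℕ) (p : Fin k → Fin 2) (m : Fin k) :
    (Finset.univ.filter (fun n => n ≤ m ∧ p n = 0)).card
      = ((m : ℕ) + 1) - Sfun k p (m + 1) := by
  have hsplit : (Finset.univ.filter (fun n => n ≤ m ∧ p n = 1)).card
      + (Finset.univ.filter (fun n => n ≤ m ∧ p n = 0)).card
      = (Finset.univ.filter (fun n : Fin k => n ≤ m)).card := by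
    rw [← Finset.filter_filter, ← Finset.filter_filter]
    have hneg : Finset.filter (fun n => p n = 0) (Finset.univ.filter (fun n : Fin k => n ≤ m))
        = Finset.filter (fun n => ¬ p n = 1) (Finset.univ.filter (fun n : Fin k => n ≤ m)) := by
      apply Finset.filter_congr
      intro n _
      constructor
      · intro h; simp [h]
      · intro h
        have := (p n).isLt
        have h1 : (p n : ℕ) ≠ 1 := fun hc => h (Fin.ext hc)
        exact Fin.ext (by omega)
    rw [hneg]
    exact Finset.card_filter_add_card_filter_not _
  have hcard : (Finset.univ.filter (fun n : Fin k => n ≤ m)).card = (m : ℕ) + 1 := by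
    have : Finset.univ.filter (fun n : Fin k => n ≤ m) = Finset.Iic m := by
      ext n; simp
    rw [this, Fin.card_Iic]
  rw [rank_one] at hsplit
  have hle := Sfun_le k p (m + 1)
  omega

lemma Sfun_f1 (k i : ℕ) (p : Fin k → Fin 2) (j : ℕ) :
    Sfun k (f1 k i p) j = Sfun k p j - min (Sfun k p j) i := by
  induction j with
  | zero => simp [Sfun_zero]
  | succ j ih =>
    by_cases hj : j < k
    · rw [Sfun_succ_lt k _ hj, Sfun_succ_lt k p hj, ih]
      have hrank := rank_one k p ⟨j, hj⟩
      have hS : Sfun k p ((⟨j, hj⟩ : Fin k) + 1) = Sfun k p j + (p ⟨j, hj⟩ : ℕ) := by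
        exact Sfun_succ_lt k p hj
      rw [hS] at hrank
      unfold f1
      by_cases hp : p ⟨j, hj⟩ = 1
      · rw [hp] at hrank
        simp only [Fin.val_one] at hrank
        by_cases hc : (Finset.univ.filter (fun n => n ≤ (⟨j, hj⟩ : Fin k) ∧ p n = 1)).card ≤ i
        · rw [if_pos ⟨hp, hc⟩]
          rw [hrank] at hc
          simp only [hp, Fin.val_zero, Fin.val_one]
          omega
        · rw [if_neg (fun hh => hc hh.2)]
          rw [hrank] at hc
          simp only [hp, Fin.val_one]
          omega
      · rw [if_neg (fun hh => hp hh.1)]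
        have := (p ⟨j, hj⟩).isLt
        have hv : (p ⟨j, hj⟩ : ℕ) = 0 := by
          have : (p ⟨j, hj⟩ : ℕ) ≠ 1 := fun hc => hp (Fin.ext hc)
          omega
        rw [hv]
        omega
    · rw [Sfun_succ_ge k _ (by omega), Sfun_succ_ge k p (by omega), ih]

lemma Sfun_f0 (k i : ℕ) (p : Fin k → Fin 2) (j : ℕ) :
    Sfun k (f0 k i p) j = Sfun k p j + min (min j k - Sfun k p j) i := by
  induction j with
  | zero => simp [Sfun_zero]
  | succ j ih =>
    have hle := Sfun_le k p j
    by_cases hj : j < k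
    · rw [Sfun_succ_lt k _ hj, Sfun_succ_lt k p hj, ih]
      have hrank := rank_zero k p ⟨j, hj⟩
      have hS : Sfun k p ((⟨j, hj⟩ : Fin k) + 1) = Sfun k p j + (p ⟨j, hj⟩ : ℕ) := by
        exact Sfun_succ_lt k p hj
      rw [hS] at hrank
      unfold f0
      by_cases hp : p ⟨j, hj⟩ = 0
      · rw [hp] at hrank
        simp only [Fin.val_zero, Nat.add_zero] at hrank
        by_cases hc : (Finset.univ.filter (fun n => n ≤ (⟨j, hj⟩ : Fin k) ∧ p n = 0)).card ≤ i
        · rw [if_pos ⟨hp, hc⟩]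
          rw [hrank] at hc
          simp only [hp, Fin.val_zero, Fin.val_one]
          omega
        · rw [if_neg (fun hh => hc hh.2)]
          rw [hrank] at hc
          simp only [hp, Fin.val_zero]
          omega
      · rw [if_neg (fun hh => hp hh.1)]
        have := (p ⟨j, hj⟩).isLt
        have hv : (p ⟨j, hj⟩ : ℕ) = 1 := by
          have : (p ⟨j, hj⟩ : ℕ) ≠ 0 := fun hc => hp (Fin.ext hc)
          omega
        rw [hv]
        omega
    · rw [Sfun_succ_ge k _ (by omega), Sfun_succ_ge k p (by omega), ih]
      have : min j k = min (j + 1) k := by omega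
      rw [this]

lemma sum_Icc_eq (k : ℕ) (p : Fin k → Fin 2) {j : ℕ} (hj : j ≤ k) :
    ∑ i ∈ Finset.Icc 1 j, ext' k p i = Sfun k p j := by
  induction j with
  | zero => simp [Sfun_zero]
  | succ j ih =>
    have hjk : j < k := hj
    have hins : Finset.Icc 1 (j + 1) = insert (j + 1) (Finset.Icc 1 j) := by
      ext n; simp only [Finset.mem_Icc, Finset.mem_insert]; omega
    rw [hins, Finset.sum_insert (by simp), ih (by omega), Sfun_succ_lt k p hjk]
    have hext : ext' k p (j + 1) = (p ⟨j, hjk⟩ : ℕ) := by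
      unfold ext'
      rw [dif_pos ⟨by omega, by omega⟩]
      congr
    rw [hext]
    ring

/-- `p'' ≤ f_{k₂}^1(p')` iff `p' ≥ f_{k₂}^0(p'')`, for `p''` with `k₀` ones and
`p'` with `k₀ + k₂` ones. -/
theorem stmt8 (k k0 k2 : ℕ) (h : k0 + k2 ≤ k) (p'' p' : Fin k → Fin 2)
    (h1 : onesCount k p'' = k0) (h2 : onesCount k p' = k0 + k2) :
    tle k p'' (f1 k k2 p') ↔ tle k (f0 k k2 p'') p' := by
  unfold tle
  constructor <;> intro H j hj <;>
    [skip; skip] <;>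
    · have hj' := Finset.mem_Icc.mp hj
      have Hj := H j hj
      rw [sum_Icc_eq k _ hj'.2, sum_Icc_eq k _ hj'.2] at Hj ⊢
      rw [Sfun_f1] at *
      rw [Sfun_f0] at *
      have hb1 := Sfun_le k p' j
      have hb2 := Sfun_le k p'' j
      omega
end
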